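/- arXiv:0905.3255 — 11 statements merged into one kernel-verified Lean document; each statement's English description precedes it below -/
import Mathlib

section
/- Let F, G ∈ k[x,y,z] be homogeneous of degrees d and δ respectively. Define R(F,G)(x,y,z) as the resultant with respect to the homogeneous variables (λ,μ) of the two forms F((μ-λ)x, (μ-λ)y, μz) and G(λx, λy, μz). Then R(F,G) is either zero or a homogeneous polynomial of degree 2dδ in x, y, z. -/
open MvPolynomial

/-- The Sylvester matrix of two univariate polynomials `f`, `g`, regarded as
forms of (declared) degrees `d` and `e` respectively.  Its first `e` rows carry
the shifted coefficient sequence `f.coeff d, …, f.coeff 0`, and the remaining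
`d` rows the sequence `g.coeff e, …, g.coeff 0`. -/
noncomputable def sylvester {R : Type*} [CommRing R] (d e : ℕ)
    (f g : Polynomial R) : Matrix (Fin (e + d)) (Fin (e + d)) R :=
  Matrix.of fun i j =>
    if (i : ℕ) < e then
      (if (i : ℕ) ≤ (j : ℕ) ∧ (j : ℕ) ≤ (i : ℕ) + d then f.coeff (d + i - j) else 0)
    else
      (if (i : ℕ) - e ≤ (j : ℕ) ∧ (j : ℕ) ≤ ((i : ℕ) - e) + e then
        g.coeff (e + ((i : ℕ) - e) - j) else 0)

/-- The resultant of `f` and `g` regarded as forms of degrees `d` and `e`. -/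
noncomputable def resultantD {R : Type*} [CommRing R] (d e : ℕ)
    (f g : Polynomial R) : R :=
  (sylvester d e f g).det

/-- `F((μ-λ)x, (μ-λ)y, μz)` as a binary form in `(λ,μ)`, dehomogenized at
`μ = 1`: the polynomial `F((1-λ)x, (1-λ)y, z)` in the variable `λ` with
coefficients in `k[x,y,z]`. -/
noncomputable def conchSubB {k : Type*} [CommRing k] (F : MvPolynomial (Fin 3) k) :
    Polynomial (MvPolynomial (Fin 3) k) :=
  MvPolynomial.aeval
    ![(1 - Polynomial.X) * Polynomial.C (X 0),
      (1 - Polynomial.X) * Polynomial.C (X 1),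
      Polynomial.C (X 2)] F

/-- `G(λx, λy, μz)` dehomogenized at `μ = 1`: the polynomial `G(λx, λy, z)`
in the variable `λ` with coefficients in `k[x,y,z]`. -/
noncomputable def conchSubC {k : Type*} [CommRing k] (G : MvPolynomial (Fin 3) k) :
    Polynomial (MvPolynomial (Fin 3) k) :=
  MvPolynomial.aeval
    ![Polynomial.X * Polynomial.C (X 0),
      Polynomial.X * Polynomial.C (X 1),
      Polynomial.C (X 2)] G

/-- The conchoidal resultant `R(F,G)`: the resultant, with respect to the
homogeneous variables `(λ,μ)`, of `F((μ-λ)x,(μ-λ)y,μz)` (a form of degree `d`)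
and `G(λx,λy,μz)` (a form of degree `e`). -/
noncomputable def conchRes {k : Type*} [CommRing k] (d e : ℕ)
    (F G : MvPolynomial (Fin 3) k) : MvPolynomial (Fin 3) k :=
  resultantD d e (conchSubB F) (conchSubC G)



section Aux

variable {k : Type*} [CommRing k]

def CoeffHomog (a : ℕ) (p : Polynomial (MvPolynomial (Fin 3) k)) : Prop :=
  ∀ m, (p.coeff m).IsHomogeneous a

lemma CoeffHomog.mul {a b : ℕ} {p q : Polynomial (MvPolynomial (Fin 3) k)}
    (hp : CoeffHomog a p) (hq : CoeffHomog b q) : CoeffHomog (a + b) (p * q) := by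
  intro m
  rw [Polynomial.coeff_mul]
  exact IsHomogeneous.sum _ _ _ fun x _ => (hp x.1).mul (hq x.2)

lemma coeffHomog_one : CoeffHomog 0 (1 : Polynomial (MvPolynomial (Fin 3) k)) := by
  intro m
  rw [Polynomial.coeff_one]
  split <;> simp [isHomogeneous_one, isHomogeneous_zero]

lemma CoeffHomog.pow {a : ℕ} {p : Polynomial (MvPolynomial (Fin 3) k)}
    (hp : CoeffHomog a p) (n : ℕ) : CoeffHomog (n * a) (p ^ n) := by
  induction n with
  | zero => simpa using coeffHomog_one
  | succ n ih =>
      have := ih.mul hp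
      rw [← pow_succ] at this
      convert this using 1
      ring

lemma coeffHomog_C {r : MvPolynomial (Fin 3) k} {a : ℕ} (hr : r.IsHomogeneous a) :
    CoeffHomog a (Polynomial.C r) := by
  intro m
  rw [Polynomial.coeff_C]
  split
  · exact hr
  · exact isHomogeneous_zero _ _ _

lemma coeffHomog_one_sub_X :
    CoeffHomog 0 (1 - Polynomial.X : Polynomial (MvPolynomial (Fin 3) k)) := by
  intro m
  rw [Polynomial.coeff_sub, Polynomial.coeff_one, Polynomial.coeff_X]
  split <;> split <;>
    simp_all [isHomogeneous_one, isHomogeneous_zero, (isHomogeneous_one _ _).neg]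

lemma coeffHomog_X_mul {p : Polynomial (MvPolynomial (Fin 3) k)} {a : ℕ}
    (hp : CoeffHomog a p) : CoeffHomog a (Polynomial.X * p) := by
  intro m
  cases m with
  | zero => simp only [Polynomial.coeff_X_mul_zero]; exact isHomogeneous_zero _ _ _
  | succ n => rw [Polynomial.coeff_X_mul]; exact hp n

lemma coeffHomog_prod (v : Fin 3 → Polynomial (MvPolynomial (Fin 3) k))
    (hv : ∀ i, CoeffHomog 1 (v i)) (u : Fin 3 →₀ ℕ) :
    CoeffHomog (u.sum fun _ e => e * 1) (u.prod fun i e => v i ^ e) := by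
  classical
  induction u using Finsupp.induction with
  | zero => simpa using coeffHomog_one
  | single_add i e f hif he ih =>
      rw [Finsupp.prod_add_index (by simp) (by simp [pow_add]),
          Finsupp.sum_add_index (by simp) (by simp [add_mul])]
      rw [Finsupp.prod_single_index (by simp), Finsupp.sum_single_index (by simp)]
      exact ((hv i).pow e).mul ih

lemma coeffHomog_aeval {d : ℕ} {F : MvPolynomial (Fin 3) k} (hF : F.IsHomogeneous d)
    (v : Fin 3 → Polynomial (MvPolynomial (Fin 3) k)) (hv : ∀ i, CoeffHomog 1 (v i)) :
    CoeffHomog d (MvPolynomial.aeval v F) := by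
  intro m
  rw [F.as_sum, map_sum, Polynomial.finset_sum_coeff]
  apply IsHomogeneous.sum
  intro u hu
  rw [aeval_monomial]
  have hdeg : u.degree = d := by
    have := hF (mem_support_iff.mp hu)
    rwa [Finsupp.degree_eq_weight_one]
  have h1 := coeffHomog_prod v hv u
  have h2 : CoeffHomog d (u.prod fun i e => v i ^ e) := by
    have : (u.sum fun _ e => e * 1) = d := by
      rw [← hdeg]; simp [Finsupp.degree, Finsupp.sum]; rfl
    rwa [this] at h1
  have h0 : CoeffHomog 0 (algebraMap k (Polynomial (MvPolynomial (Fin 3) k)) (coeff u F)) := by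
    have : algebraMap k (Polynomial (MvPolynomial (Fin 3) k)) (coeff u F)
        = Polynomial.C (MvPolynomial.C (coeff u F)) := rfl
    rw [this]
    exact coeffHomog_C (isHomogeneous_C _ _)
  have := (h0.mul h2) m
  simpa using this

end Aux

section Det

variable {k : Type*} [CommRing k]

lemma det_isHomogeneous {n : ℕ} (M : Matrix (Fin n) (Fin n) (MvPolynomial (Fin 3) k))
    (w : Fin n → ℕ) (h : ∀ i j, (M i j).IsHomogeneous (w i)) :
    M.det.IsHomogeneous (∑ i, w i) := by
  rw [Matrix.det_apply]
  apply IsHomogeneous.sum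
  intro σ _
  have hprod : (∏ i, M (σ i) i).IsHomogeneous (∑ i, w i) := by
    have := IsHomogeneous.prod Finset.univ (fun i => M (σ i) i) (fun i => w (σ i))
      (fun i _ => h (σ i) i)
    rwa [Equiv.sum_comp σ w] at this
  rcases Int.units_eq_one_or (Equiv.Perm.sign σ) with hs | hs <;> rw [hs]
  · simpa using hprod
  · simpa using hprod.neg

end Det

section Final
variable {k : Type*} [CommRing k]

lemma sylvester_entry_homog {d e : ℕ} {f g : Polynomial (MvPolynomial (Fin 3) k)}
    (hf : CoeffHomog d f) (hg : CoeffHomog e g) (i j : Fin (e + d)) :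
    ((sylvester d e f g) i j).IsHomogeneous (if (i : ℕ) < e then d else e) := by
  unfold sylvester
  rw [Matrix.of_apply]
  split
  · split
    · exact hf _
    · exact isHomogeneous_zero _ _ _
  · split
    · exact hg _
    · exact isHomogeneous_zero _ _ _

lemma sum_weights (d e : ℕ) :
    (∑ i : Fin (e + d), if (i : ℕ) < e then d else e) = 2 * d * e := by
  rw [Fin.sum_univ_eq_sum_range (fun i => if i < e then d else e)]
  rw [Finset.range_eq_Ico, ← Finset.sum_Ico_consecutive _ (Nat.zero_le e) (Nat.le_add_right e d)]
  have h1 : ∑ i ∈ Finset.Ico 0 e, (if i < e then d else e) = e * d := by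
    rw [Finset.sum_congr rfl (fun i hi => if_pos (Finset.mem_Ico.mp hi).2)]
    simp [mul_comm]
  have h2 : ∑ i ∈ Finset.Ico e (e + d), (if i < e then d else e) = d * e := by
    rw [Finset.sum_congr rfl (fun i hi => if_neg (by
      have := (Finset.mem_Ico.mp hi).1; omega))]
    simp [mul_comm]
  rw [h1, h2]; ring

end Final

/-- the conchoidal resultant of forms of degrees `d` and `δ` is
either zero or homogeneous of degree `2dδ`. -/
theorem conchRes_isHomogeneous {k : Type*} [Field k] (d δ : ℕ)
    (F G : MvPolynomial (Fin 3) k)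
    (hF : F.IsHomogeneous d) (hG : G.IsHomogeneous δ) :
    conchRes d δ F G = 0 ∨ (conchRes d δ F G).IsHomogeneous (2 * d * δ) := by
  right
  have hB : CoeffHomog d (conchSubB F) := by
    apply coeffHomog_aeval hF
    intro i
    fin_cases i
    · simpa using coeffHomog_one_sub_X.mul (coeffHomog_C (isHomogeneous_X _ _))
    · simpa using coeffHomog_one_sub_X.mul (coeffHomog_C (isHomogeneous_X _ _))
    · simpa using coeffHomog_C (isHomogeneous_X _ _)
  have hC : CoeffHomog δ (conchSubC G) := by
    apply coeffHomog_aeval hG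
    intro i
    fin_cases i
    · exact coeffHomog_X_mul (coeffHomog_C (isHomogeneous_X _ _))
    · exact coeffHomog_X_mul (coeffHomog_C (isHomogeneous_X _ _))
    · simpa using coeffHomog_C (isHomogeneous_X _ _)
  have := det_isHomogeneous (sylvester d δ (conchSubB F) (conchSubC G))
    (fun i => if (i : ℕ) < δ then d else δ)
    (fun i j => sylvester_entry_homog hB hC i j)
  rw [sum_weights d δ] at this
  exact this
end

section
/- Let F, G ∈ k[x,y,z] be homogeneous of degrees d and δ. Let R(F,G) be the resultant with respect to (λ,μ) of F((μ-λ)x,(μ-λ)y,μz) and G(λx,λy,μz), and similarly let R(G,F) be the resultant of G((μ-λ)x,(μ-λ)y,μz) and F(λx,λy,μz). Then R(F,G) = c·R(G,F) for some nonzero constant c ∈ k (in particular the two polynomials define the same divisor). -/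
open MvPolynomial

namespace ConchAux

open Polynomial Finset Matrix

variable {R : Type*} [CommRing R]

/-- The substitution `λ ↦ 1 - λ`. -/
noncomputable def sig (p : Polynomial R) : Polynomial R := p.comp (1 - Polynomial.X)

lemma natDegree_one_sub_X : (1 - Polynomial.X : Polynomial R).natDegree ≤ 1 := by
  refine (natDegree_sub_le _ _).trans ?_
  simp [natDegree_X_le]

lemma natDegree_sig_le (p : Polynomial R) : (sig p).natDegree ≤ p.natDegree := by
  refine (natDegree_comp_le).trans ?_
  calc p.natDegree * (1 - Polynomial.X : Polynomial R).natDegree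
      ≤ p.natDegree * 1 := Nat.mul_le_mul_left _ natDegree_one_sub_X
    _ = p.natDegree := mul_one _

lemma sig_sig (p : Polynomial R) : sig (sig p) = p := by
  unfold sig
  rw [Polynomial.comp_assoc]
  simp [sub_sub_cancel]

/-- Row polynomials of the sylvester matrix. -/
noncomputable def rowPoly (d e : ℕ) (f g : Polynomial R) (i : ℕ) : Polynomial R :=
  if i < e then f * Polynomial.X ^ (e - 1 - i) else g * Polynomial.X ^ (d - 1 - (i - e))

lemma natDegree_rowPoly_lt (d e : ℕ) (f g : Polynomial R)
    (hf : f.natDegree ≤ d) (hg : g.natDegree ≤ e) (i : Fin (e + d)) :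
    (rowPoly d e f g (i : ℕ)).natDegree < e + d := by
  have hi := i.isLt
  unfold rowPoly
  split_ifs with h
  · refine lt_of_le_of_lt (natDegree_mul_le.trans ?_)
      (show d + (e - 1 - (i : ℕ)) < e + d by omega)
    have := natDegree_X_pow_le (R := R) (e - 1 - (i : ℕ))
    omega
  · refine lt_of_le_of_lt (natDegree_mul_le.trans ?_)
      (show e + (d - 1 - ((i : ℕ) - e)) < e + d by omega)
    have := natDegree_X_pow_le (R := R) (d - 1 - ((i : ℕ) - e))
    omega

lemma sylvester_apply (d e : ℕ) (f g : Polynomial R)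
    (hf : f.natDegree ≤ d) (hg : g.natDegree ≤ e) (i j : Fin (e + d)) :
    sylvester d e f g i j = (rowPoly d e f g (i : ℕ)).coeff (e + d - 1 - (j : ℕ)) := by
  have hi := i.isLt
  have hj := j.isLt
  unfold _root_.sylvester rowPoly
  by_cases h : (i : ℕ) < e
  · simp only [Matrix.of_apply, if_pos h]
    rw [coeff_mul_X_pow']
    by_cases h1 : (i : ℕ) ≤ (j : ℕ) ∧ (j : ℕ) ≤ (i : ℕ) + d
    · rw [if_pos h1, if_pos (by omega)]
      congr 1
      omega
    · rw [if_neg h1]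
      by_cases h2 : e - 1 - (i : ℕ) ≤ e + d - 1 - (j : ℕ)
      · rw [if_pos h2]
        refine (coeff_eq_zero_of_natDegree_lt (lt_of_le_of_lt hf ?_)).symm
        omega
      · rw [if_neg h2]
  · simp only [Matrix.of_apply, if_neg h]
    rw [coeff_mul_X_pow']
    by_cases h1 : (i : ℕ) - e ≤ (j : ℕ) ∧ (j : ℕ) ≤ ((i : ℕ) - e) + e
    · rw [if_pos h1, if_pos (by omega)]
      congr 1
      omega
    · rw [if_neg h1]
      by_cases h2 : d - 1 - ((i : ℕ) - e) ≤ e + d - 1 - (j : ℕ)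
      · rw [if_pos h2]
        refine (coeff_eq_zero_of_natDegree_lt (lt_of_le_of_lt hg ?_)).symm
        omega
      · rw [if_neg h2]

lemma coeff_one_sub_X_pow (m t : ℕ) :
    ((1 - Polynomial.X : Polynomial R) ^ m).coeff t = (-1) ^ t * (m.choose t : R) := by
  have h1 : (1 - Polynomial.X : Polynomial R) = -(Polynomial.X + Polynomial.C (-1 : R)) := by
    rw [map_neg, Polynomial.C_1]; ring
  rw [h1, neg_pow, show ((-1 : Polynomial R) ^ m) = Polynomial.C ((-1 : R) ^ m) by
    rw [map_pow, map_neg, Polynomial.C_1], Polynomial.coeff_C_mul, coeff_X_add_C_pow]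
  by_cases ht : t ≤ m
  · have h2 : m + (m - t) = 2 * (m - t) + t := by omega
    rw [← mul_assoc, ← pow_add, h2, pow_add, pow_mul, neg_one_sq, one_pow, one_mul]
  · rw [Nat.choose_eq_zero_of_lt (by omega)]
    simp

lemma binom_sum (y : Polynomial R) {m N : ℕ} (h : m < N) :
    ∑ t ∈ Finset.range N, (m.choose t : Polynomial R) * y ^ t = (y + 1) ^ m := by
  rw [add_pow]
  simp only [one_pow, mul_one]
  refine (Finset.sum_subset (Finset.range_subset_range.2 (Nat.succ_le_of_lt h)) ?_).symm.trans ?_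
  · intro t _ ht
    rw [Nat.choose_eq_zero_of_lt (by simpa using ht)]
    simp
  · refine Finset.sum_congr rfl fun t _ => ?_
    ring

/-- The left (row-operation) matrix. -/
noncomputable def lmat (d e : ℕ) : Matrix (Fin (e + d)) (Fin (e + d)) R :=
  Matrix.of fun i a =>
    if (i : ℕ) < e then
      (if (a : ℕ) < e then
        (-1) ^ (e - 1 - (a : ℕ)) * ((e - 1 - (i : ℕ)).choose (e - 1 - (a : ℕ)) : R) else 0)
    else
      (if (a : ℕ) < e then 0 else
        (-1) ^ (d - 1 - ((a : ℕ) - e)) *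
          ((d - 1 - ((i : ℕ) - e)).choose (d - 1 - ((a : ℕ) - e)) : R))

/-- The right (column-operation) matrix. -/
noncomputable def rmat (n : ℕ) : Matrix (Fin n) (Fin n) R :=
  Matrix.of fun b j =>
    (-1) ^ (n - 1 - (j : ℕ)) * ((n - 1 - (b : ℕ)).choose (n - 1 - (j : ℕ)) : R)

lemma lmat_blockTriangular (d e : ℕ) : (lmat d e (R := R)).BlockTriangular id := by
  intro i a h
  have hi := i.isLt
  have ha := a.isLt
  have h' : (a : ℕ) < (i : ℕ) := h
  simp only [lmat, Matrix.of_apply]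
  split_ifs with h1 h2 h3
  · rw [Nat.choose_eq_zero_of_lt (by omega)]
    simp
  · rfl
  · rfl
  · rw [Nat.choose_eq_zero_of_lt (by omega)]
    simp

lemma rmat_blockTriangular (n : ℕ) : (rmat n (R := R)).BlockTriangular id := by
  intro b j h
  have hb := b.isLt
  have h' : (j : ℕ) < (b : ℕ) := h
  simp only [rmat, Matrix.of_apply]
  rw [Nat.choose_eq_zero_of_lt (by omega)]
  simp

lemma det_lmat (d e : ℕ) : ∃ M : ℕ, (lmat d e (R := R)).det = (-1) ^ M := by
  refine ⟨∑ i : Fin (e + d),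
    (if (i : ℕ) < e then e - 1 - (i : ℕ) else d - 1 - ((i : ℕ) - e)), ?_⟩
  rw [Matrix.det_of_upperTriangular (lmat_blockTriangular d e),
    ← Finset.prod_pow_eq_pow_sum]
  refine Finset.prod_congr rfl fun i _ => ?_
  simp only [lmat, Matrix.of_apply]
  split_ifs with h
  · simp [Nat.choose_self]
  · simp [Nat.choose_self]

lemma det_rmat (n : ℕ) : ∃ M : ℕ, (rmat n (R := R)).det = (-1) ^ M := by
  refine ⟨∑ i : Fin n, (n - 1 - (i : ℕ)), ?_⟩
  rw [Matrix.det_of_upperTriangular (rmat_blockTriangular n), ← Finset.prod_pow_eq_pow_sum]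
  refine Finset.prod_congr rfl fun i _ => ?_
  simp [rmat, Nat.choose_self]

lemma sum_rmat {n : ℕ} (p : Polynomial R) (hp : p.natDegree < n) (j : Fin n) :
    ∑ b : Fin n, p.coeff (n - 1 - (b : ℕ)) * rmat n b j
      = (p.comp (1 - Polynomial.X)).coeff (n - 1 - (j : ℕ)) := by
  conv_rhs => rw [p.as_sum_range' n hp]
  rw [Polynomial.sum_comp, Polynomial.finset_sum_coeff]
  simp only [Polynomial.monomial_comp, Polynomial.coeff_C_mul, coeff_one_sub_X_pow]
  rw [← Finset.sum_range_reflect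
    (fun m => p.coeff m * ((-1 : R) ^ (n - 1 - (j : ℕ)) * (m.choose (n - 1 - (j : ℕ)) : R))) n]
  rw [← Fin.sum_univ_eq_sum_range
    (fun b => p.coeff (n - 1 - b) *
      ((-1 : R) ^ (n - 1 - (j : ℕ)) * ((n - 1 - b).choose (n - 1 - (j : ℕ)) : R))) n]
  refine Finset.sum_congr rfl fun b _ => ?_
  simp only [rmat, Matrix.of_apply]

lemma sum_lmat (d e : ℕ) (f g : Polynomial R) (i : Fin (e + d)) :
    ∑ a : Fin (e + d), Polynomial.C (lmat d e i a) * rowPoly d e f g (a : ℕ)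
      = if (i : ℕ) < e then f * (1 - Polynomial.X) ^ (e - 1 - (i : ℕ))
        else g * (1 - Polynomial.X) ^ (d - 1 - ((i : ℕ) - e)) := by
  have hi := i.isLt
  by_cases hi' : (i : ℕ) < e
  · rw [if_pos hi']
    have key : ∀ a : Fin (e + d), Polynomial.C (lmat d e i a) * rowPoly d e f g (a : ℕ)
        = (fun a : ℕ => Polynomial.C (if a < e then
            ((-1) ^ (e - 1 - a) * ((e - 1 - (i : ℕ)).choose (e - 1 - a) : R)) else 0)
            * rowPoly d e f g a) (a : ℕ) := by
      intro a
      simp only [lmat, Matrix.of_apply, if_pos hi']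
    rw [Finset.sum_congr rfl (fun a _ => key a),
      Fin.sum_univ_eq_sum_range (fun a : ℕ => Polynomial.C (if a < e then
            ((-1) ^ (e - 1 - a) * ((e - 1 - (i : ℕ)).choose (e - 1 - a) : R)) else 0)
            * rowPoly d e f g a) (e + d)]
    rw [← Finset.sum_subset (Finset.range_subset_range.2 (Nat.le_add_right e d))
      (fun a _ ha => by rw [if_neg (by simpa using ha)]; simp)]
    have key2 : ∀ a ∈ Finset.range e,
        Polynomial.C (if a < e then
            ((-1) ^ (e - 1 - a) * ((e - 1 - (i : ℕ)).choose (e - 1 - a) : R)) else 0)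
            * rowPoly d e f g a
        = (fun t : ℕ => Polynomial.C ((-1) ^ t * (((e - 1 - (i : ℕ)).choose t : R)))
            * (f * Polynomial.X ^ t)) (e - 1 - a) := by
      intro a ha
      rw [Finset.mem_range] at ha
      rw [if_pos ha, rowPoly, if_pos ha]
    rw [Finset.sum_congr rfl key2,
      Finset.sum_range_reflect (fun t : ℕ => Polynomial.C ((-1) ^ t
        * (((e - 1 - (i : ℕ)).choose t : R))) * (f * Polynomial.X ^ t)) e]
    have hm : e - 1 - (i : ℕ) < e := by omega
    rw [show (1 - Polynomial.X : Polynomial R) = -Polynomial.X + 1 by ring,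
      ← binom_sum (-Polynomial.X : Polynomial R) hm, Finset.mul_sum]
    refine Finset.sum_congr rfl fun t _ => ?_
    rw [_root_.map_mul, map_pow, map_neg, Polynomial.C_1, Polynomial.C_eq_natCast, neg_pow]
    ring
  · rw [if_neg hi']
    have key : ∀ a : Fin (e + d), Polynomial.C (lmat d e i a) * rowPoly d e f g (a : ℕ)
        = (fun a : ℕ => Polynomial.C (if a < e then 0 else
            ((-1) ^ (d - 1 - (a - e)) * ((d - 1 - ((i : ℕ) - e)).choose (d - 1 - (a - e)) : R)))
            * rowPoly d e f g a) (a : ℕ) := by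
      intro a
      simp only [lmat, Matrix.of_apply, if_neg hi']
    rw [Finset.sum_congr rfl (fun a _ => key a),
      Fin.sum_univ_eq_sum_range (fun a : ℕ => Polynomial.C (if a < e then 0 else
            ((-1) ^ (d - 1 - (a - e)) * ((d - 1 - ((i : ℕ) - e)).choose (d - 1 - (a - e)) : R)))
            * rowPoly d e f g a) (e + d)]
    rw [← Finset.sum_subset (show Finset.Ico e (e + d) ⊆ Finset.range (e + d) by
        intro x hx; rw [Finset.mem_Ico] at hx; rw [Finset.mem_range]; omega)
      (fun a ha ha' => by
        rw [Finset.mem_range] at ha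
        rw [Finset.mem_Ico] at ha'
        rw [if_pos (by omega)]
        simp)]
    rw [Finset.sum_Ico_eq_sum_range]
    have hd : e + d - e = d := by omega
    rw [hd]
    have key2 : ∀ t ∈ Finset.range d,
        Polynomial.C (if e + t < e then 0 else
            ((-1) ^ (d - 1 - (e + t - e)) *
              ((d - 1 - ((i : ℕ) - e)).choose (d - 1 - (e + t - e)) : R)))
            * rowPoly d e f g (e + t)
        = (fun s : ℕ => Polynomial.C ((-1) ^ s * (((d - 1 - ((i : ℕ) - e)).choose s : R)))
            * (g * Polynomial.X ^ s)) (d - 1 - t) := by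
      intro t ht
      rw [Finset.mem_range] at ht
      rw [if_neg (by omega), rowPoly, if_neg (by omega)]
      have h1 : e + t - e = t := by omega
      rw [h1]
    rw [Finset.sum_congr rfl key2,
      Finset.sum_range_reflect (fun s : ℕ => Polynomial.C ((-1) ^ s
        * (((d - 1 - ((i : ℕ) - e)).choose s : R))) * (g * Polynomial.X ^ s)) d]
    have hm : d - 1 - ((i : ℕ) - e) < d := by omega
    rw [show (1 - Polynomial.X : Polynomial R) = -Polynomial.X + 1 by ring,
      ← binom_sum (-Polynomial.X : Polynomial R) hm, Finset.mul_sum]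
    refine Finset.sum_congr rfl fun t _ => ?_
    rw [_root_.map_mul, map_pow, map_neg, Polynomial.C_1, Polynomial.C_eq_natCast, neg_pow]
    ring

lemma sylvester_sig (d e : ℕ) (f g : Polynomial R)
    (hf : f.natDegree ≤ d) (hg : g.natDegree ≤ e) :
    sylvester d e (sig f) (sig g) = lmat d e * sylvester d e f g * rmat (e + d) := by
  have hsf : (sig f).natDegree ≤ d := (natDegree_sig_le f).trans hf
  have hsg : (sig g).natDegree ≤ e := (natDegree_sig_le g).trans hg
  ext i j
  rw [Matrix.mul_assoc, Matrix.mul_apply]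
  simp_rw [Matrix.mul_apply, sylvester_apply d e f g hf hg]
  have hSR : ∀ a : Fin (e + d),
      ∑ b : Fin (e + d), (rowPoly d e f g (a : ℕ)).coeff (e + d - 1 - (b : ℕ)) * rmat (e + d) b j
      = ((rowPoly d e f g (a : ℕ)).comp (1 - Polynomial.X)).coeff (e + d - 1 - (j : ℕ)) :=
    fun a => sum_rmat _ (natDegree_rowPoly_lt d e f g hf hg a) j
  simp_rw [hSR]
  rw [sylvester_apply d e (sig f) (sig g) hsf hsg i j]
  simp_rw [← Polynomial.coeff_C_mul]
  rw [← Polynomial.finset_sum_coeff]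
  have step : ∑ a : Fin (e + d),
      Polynomial.C (lmat d e i a) * ((rowPoly d e f g (a : ℕ)).comp (1 - Polynomial.X))
      = (∑ a : Fin (e + d), Polynomial.C (lmat d e i a) * rowPoly d e f g (a : ℕ)).comp
          (1 - Polynomial.X) := by
    rw [Polynomial.sum_comp]
    refine Finset.sum_congr rfl fun a _ => ?_
    rw [Polynomial.mul_comp, Polynomial.C_comp]
  rw [step, sum_lmat d e f g i]
  congr 1
  unfold rowPoly sig
  split_ifs with h
  · rw [Polynomial.mul_comp, Polynomial.pow_comp, Polynomial.sub_comp, Polynomial.one_comp,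
      Polynomial.X_comp, sub_sub_cancel]
  · rw [Polynomial.mul_comp, Polynomial.pow_comp, Polynomial.sub_comp, Polynomial.one_comp,
      Polynomial.X_comp, sub_sub_cancel]

lemma det_sylvester_sig (d e : ℕ) (f g : Polynomial R)
    (hf : f.natDegree ≤ d) (hg : g.natDegree ≤ e) :
    ∃ M : ℕ, (sylvester d e (sig f) (sig g)).det = (-1 : R) ^ M * (sylvester d e f g).det := by
  obtain ⟨M1, h1⟩ := det_lmat (R := R) d e
  obtain ⟨M2, h2⟩ := det_rmat (R := R) (e + d)
  refine ⟨M1 + M2, ?_⟩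
  rw [sylvester_sig d e f g hf hg, Matrix.det_mul, Matrix.det_mul, h1, h2, pow_add]
  ring

/-- The block rotation permutation. -/
def rotEquiv (d e : ℕ) : Equiv.Perm (Fin (d + e)) where
  toFun i := ⟨if (i : ℕ) < d then e + (i : ℕ) else (i : ℕ) - d, by
    have := i.isLt; split_ifs <;> omega⟩
  invFun i := ⟨if (i : ℕ) < e then d + (i : ℕ) else (i : ℕ) - e, by
    have := i.isLt; split_ifs <;> omega⟩
  left_inv i := by
    have := i.isLt
    ext
    simp only
    split_ifs <;> omega
  right_inv i := by
    have := i.isLt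
    ext
    simp only
    split_ifs <;> omega

lemma sylvester_swap (d e : ℕ) (f g : Polynomial R) :
    sylvester e d g f = (((sylvester d e f g).submatrix
      (finCongr (add_comm d e)) (finCongr (add_comm d e))).submatrix (rotEquiv d e) id) := by
  ext i j
  have hi := i.isLt
  have hj := j.isLt
  have hval : ((finCongr (add_comm d e) (rotEquiv d e i) : Fin (e + d)) : ℕ)
      = if (i : ℕ) < d then e + (i : ℕ) else (i : ℕ) - d := rfl
  have hjval : ((finCongr (add_comm d e) j : Fin (e + d)) : ℕ) = (j : ℕ) := rfl
  simp only [Matrix.submatrix_apply, id_eq, _root_.sylvester, Matrix.of_apply, hval, hjval]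
  by_cases h : (i : ℕ) < d
  · rw [if_pos h, if_pos h, if_neg (show ¬ (e + (i : ℕ) < e) by omega),
      show e + (i : ℕ) - e = (i : ℕ) by omega]
  · rw [if_neg h, if_neg h, if_pos (show (i : ℕ) - d < e by omega)]

lemma det_sylvester_swap (d e : ℕ) (f g : Polynomial R) :
    (sylvester e d g f).det
      = ((Equiv.Perm.sign (rotEquiv d e) : ℤ) : R) * (sylvester d e f g).det := by
  rw [sylvester_swap d e f g, Matrix.det_permute, Matrix.det_submatrix_equiv_self]


section Assembly

open Polynomial

lemma aeval_one_sub_X {R : Type*} [CommRing R] (p : Polynomial R) :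
    (Polynomial.aeval (1 - Polynomial.X : Polynomial R)) p = sig p := by
  rw [Polynomial.aeval_def, Polynomial.algebraMap_eq]
  rfl

lemma natDegree_aeval_le {k : Type*} [CommRing k] {n : ℕ} {F : MvPolynomial (Fin 3) k}
    (hF : F.IsHomogeneous n) (v : Fin 3 → Polynomial (MvPolynomial (Fin 3) k))
    (hv : ∀ i, (v i).natDegree ≤ 1) :
    (MvPolynomial.aeval v F).natDegree ≤ n := by
  conv_lhs => rw [F.as_sum]
  rw [map_sum]
  refine Polynomial.natDegree_sum_le_of_forall_le _ _ fun s hs => ?_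
  rw [MvPolynomial.aeval_monomial]
  refine Polynomial.natDegree_mul_le.trans ?_
  have h0 : (algebraMap k (Polynomial (MvPolynomial (Fin 3) k))
      (MvPolynomial.coeff s F)).natDegree = 0 := by
    rw [Polynomial.algebraMap_apply]
    exact Polynomial.natDegree_C _
  have hdeg : s.degree = n := by
    rw [Finsupp.degree_eq_weight_one]
    exact hF (MvPolynomial.mem_support_iff.1 hs)
  have hprod : (s.prod fun i m => v i ^ m).natDegree ≤ n := by
    rw [Finsupp.prod]
    refine (Polynomial.natDegree_prod_le _ _).trans ?_
    refine le_trans (Finset.sum_le_sum fun i _ =>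
      (Polynomial.natDegree_pow_le).trans
        (le_trans (Nat.mul_le_mul_left _ (hv i)) (le_of_eq (mul_one _)))) ?_
    exact le_of_eq hdeg
  rw [h0, zero_add]
  exact hprod

variable {k : Type*} [CommRing k]

lemma natDegree_conchSubB {n : ℕ} {F : MvPolynomial (Fin 3) k} (hF : F.IsHomogeneous n) :
    (conchSubB F).natDegree ≤ n := by
  refine natDegree_aeval_le hF _ fun i => ?_
  fin_cases i
  · exact Polynomial.natDegree_mul_le.trans
      (by simpa [Polynomial.natDegree_C] using natDegree_one_sub_X)
  · exact Polynomial.natDegree_mul_le.trans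
      (by simpa [Polynomial.natDegree_C] using natDegree_one_sub_X)
  · simp [Polynomial.natDegree_C]

lemma natDegree_conchSubC {n : ℕ} {G : MvPolynomial (Fin 3) k} (hG : G.IsHomogeneous n) :
    (conchSubC G).natDegree ≤ n := by
  refine natDegree_aeval_le hG _ fun i => ?_
  fin_cases i
  · exact Polynomial.natDegree_mul_le.trans
      (by simpa [Polynomial.natDegree_C] using Polynomial.natDegree_X_le)
  · exact Polynomial.natDegree_mul_le.trans
      (by simpa [Polynomial.natDegree_C] using Polynomial.natDegree_X_le)
  · simp [Polynomial.natDegree_C]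

lemma sig_aeval (v : Fin 3 → Polynomial (MvPolynomial (Fin 3) k))
    (G : MvPolynomial (Fin 3) k) :
    sig (MvPolynomial.aeval v G) = MvPolynomial.aeval (fun i => sig (v i)) G := by
  have hphi : ∀ x : Polynomial (MvPolynomial (Fin 3) k),
      (((Polynomial.aeval (1 - Polynomial.X : Polynomial (MvPolynomial (Fin 3) k))).restrictScalars
        k) x) = sig x := fun x => aeval_one_sub_X x
  calc sig (MvPolynomial.aeval v G)
      = ((Polynomial.aeval (1 - Polynomial.X : Polynomial (MvPolynomial (Fin 3) k))).restrictScalars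
          k) (MvPolynomial.aeval v G) := (hphi _).symm
    _ = MvPolynomial.aeval (fun i =>
          ((Polynomial.aeval (1 - Polynomial.X : Polynomial (MvPolynomial (Fin 3)
            k))).restrictScalars k) (v i)) G := MvPolynomial.comp_aeval_apply _ _ G
    _ = MvPolynomial.aeval (fun i => sig (v i)) G := by simp_rw [hphi]

lemma conchSubB_eq_sig (G : MvPolynomial (Fin 3) k) :
    conchSubB G = sig (conchSubC G) := by
  have hv : (fun i => sig (![Polynomial.X * Polynomial.C (MvPolynomial.X 0 : MvPolynomial (Fin 3) k),
      Polynomial.X * Polynomial.C (MvPolynomial.X 1), Polynomial.C (MvPolynomial.X 2)] i))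
      = ![(1 - Polynomial.X) * Polynomial.C (MvPolynomial.X 0),
          (1 - Polynomial.X) * Polynomial.C (MvPolynomial.X 1),
          Polynomial.C (MvPolynomial.X 2)] := by
    funext i
    fin_cases i
    · show sig (Polynomial.X * Polynomial.C (MvPolynomial.X 0))
        = (1 - Polynomial.X) * Polynomial.C (MvPolynomial.X 0)
      unfold sig
      rw [Polynomial.mul_comp, Polynomial.X_comp, Polynomial.C_comp]
    · show sig (Polynomial.X * Polynomial.C (MvPolynomial.X 1))
        = (1 - Polynomial.X) * Polynomial.C (MvPolynomial.X 1)
      unfold sig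
      rw [Polynomial.mul_comp, Polynomial.X_comp, Polynomial.C_comp]
    · show sig (Polynomial.C (MvPolynomial.X 2 : MvPolynomial (Fin 3) k)) = Polynomial.C (MvPolynomial.X 2 : MvPolynomial (Fin 3) k)
      unfold sig
      rw [Polynomial.C_comp]
  rw [conchSubB, conchSubC, sig_aeval, hv]

lemma conchSubC_eq_sig (F : MvPolynomial (Fin 3) k) :
    conchSubC F = sig (conchSubB F) := by
  have hv : (fun i => sig (![(1 - Polynomial.X) * Polynomial.C (MvPolynomial.X 0 : MvPolynomial (Fin 3) k),
      (1 - Polynomial.X) * Polynomial.C (MvPolynomial.X 1), Polynomial.C (MvPolynomial.X 2)] i))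
      = ![Polynomial.X * Polynomial.C (MvPolynomial.X 0),
          Polynomial.X * Polynomial.C (MvPolynomial.X 1),
          Polynomial.C (MvPolynomial.X 2)] := by
    funext i
    fin_cases i
    · show sig ((1 - Polynomial.X) * Polynomial.C (MvPolynomial.X 0))
        = Polynomial.X * Polynomial.C (MvPolynomial.X 0)
      unfold sig
      rw [Polynomial.mul_comp, Polynomial.sub_comp, Polynomial.one_comp, Polynomial.X_comp,
        Polynomial.C_comp, sub_sub_cancel]
    · show sig ((1 - Polynomial.X) * Polynomial.C (MvPolynomial.X 1))
        = Polynomial.X * Polynomial.C (MvPolynomial.X 1)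
      unfold sig
      rw [Polynomial.mul_comp, Polynomial.sub_comp, Polynomial.one_comp, Polynomial.X_comp,
        Polynomial.C_comp, sub_sub_cancel]
    · show sig (Polynomial.C (MvPolynomial.X 2 : MvPolynomial (Fin 3) k)) = Polynomial.C (MvPolynomial.X 2 : MvPolynomial (Fin 3) k)
      unfold sig
      rw [Polynomial.C_comp]
  rw [conchSubC, conchSubB, sig_aeval, hv]

end Assembly

end ConchAux

/-- symmetry of the conchoidal resultant: `R(F,G) = c·R(G,F)` for
some nonzero constant `c ∈ k`. -/
theorem conchRes_symm {k : Type*} [Field k] (d δ : ℕ)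
    (F G : MvPolynomial (Fin 3) k)
    (hF : F.IsHomogeneous d) (hG : G.IsHomogeneous δ) :
    ∃ c : k, c ≠ 0 ∧ conchRes d δ F G = MvPolynomial.C c * conchRes δ d G F := by
  classical
  have hf : (conchSubB F).natDegree ≤ d := ConchAux.natDegree_conchSubB hF
  have hg : (conchSubC G).natDegree ≤ δ := ConchAux.natDegree_conchSubC hG
  obtain ⟨M, hM⟩ := ConchAux.det_sylvester_sig d δ (conchSubB F) (conchSubC G) hf hg
  have hswap := ConchAux.det_sylvester_swap d δ
    (ConchAux.sig (conchSubB F)) (ConchAux.sig (conchSubC G))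
  set u : ℤˣ := Equiv.Perm.sign (ConchAux.rotEquiv d δ) with hu
  have hs2 : (u : ℤ) * (u : ℤ) = 1 := by
    rw [← Units.val_mul, Int.units_mul_self, Units.val_one]
  set c : k := (((u : ℤ) : k)) * (-1) ^ M with hc_def
  have hc2 : c * c = 1 := by
    have h1 : (((u : ℤ) : k)) * (((u : ℤ) : k)) = 1 := by
      rw [← Int.cast_mul, hs2, Int.cast_one]
    have h2 : ((-1 : k) ^ M) * ((-1 : k) ^ M) = 1 := by
      rw [← mul_pow]
      norm_num
    calc c * c = ((((u : ℤ) : k)) * (((u : ℤ) : k))) * (((-1 : k) ^ M) * ((-1 : k) ^ M)) := by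
          rw [hc_def]; ring
      _ = 1 := by rw [h1, h2, one_mul]
  have hcne : c ≠ 0 := by
    intro h
    rw [h, mul_zero] at hc2
    exact zero_ne_one hc2
  refine ⟨c, hcne, ?_⟩
  have hcast : (MvPolynomial.C c : MvPolynomial (Fin 3) k)
      = (((u : ℤ) : MvPolynomial (Fin 3) k)) * (-1) ^ M := by
    rw [hc_def, map_mul, map_pow, map_neg, map_one, map_intCast]
  have e1 : conchRes δ d G F = MvPolynomial.C c * conchRes d δ F G := by
    unfold conchRes resultantD
    rw [ConchAux.conchSubB_eq_sig G, ConchAux.conchSubC_eq_sig F, hswap, hM, hcast]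
    ring
  rw [e1, ← mul_assoc, ← map_mul, hc2, map_one, one_mul]
end

section
/- Let F ∈ k[x,y,z] be homogeneous of degree d, and let G₁, G₂ ∈ k[x,y,z] be homogeneous of degrees δ₁, δ₂. With R(F,G) denoting the conchoidal resultant (the resultant in (λ,μ) of F((μ-λ)x,(μ-λ)y,μz) and G(λx,λy,μz)), one has R(F, G₁·G₂) = c · R(F,G₁) · R(F,G₂) for some nonzero constant c ∈ k. -/
open MvPolynomial

namespace ConchAux

open Polynomial

variable {R : Type*} [CommRing R]

/-- Column-style Sylvester-type matrix: columns indexed by `Fin s ⊕ Fin t`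
carry the coefficient vectors of `X^i * A` (for `i < s`) and `X^m * B`
(for `m < t`); rows are coefficient indices. -/
noncomputable def Sy (s t : ℕ) (A B : R[X]) :
    Matrix (Fin s ⊕ Fin t) (Fin s ⊕ Fin t) R :=
  Matrix.of fun r c =>
    (Sum.elim (fun i : Fin s => Polynomial.X ^ (i : ℕ) * A) (fun m : Fin t => Polynomial.X ^ (m : ℕ) * B) c).coeff
      (finSumFinEquiv r : ℕ)

theorem resultantD_eq_det_Sy {d e : ℕ} {f g : R[X]}
    (hf : f.natDegree ≤ d) (hg : g.natDegree ≤ e) :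
    resultantD d e f g = (Sy e d (reflect d f) (reflect e g)).det := by
  rw [resultantD, ← Matrix.det_transpose (sylvester d e f g),
    ← Matrix.det_submatrix_equiv_self finSumFinEquiv.symm (Sy e d (reflect d f) (reflect e g))]
  congr 1
  ext i j
  rcases h : finSumFinEquiv.symm j with a | b
  · have hj : (j : ℕ) = (a : ℕ) := by
      have := congrArg (fun x => ((finSumFinEquiv x : Fin (e + d)) : ℕ)) h
      simpa using this
    have hje : (j : ℕ) < e := hj ▸ a.isLt
    simp only [Matrix.transpose_apply, Matrix.submatrix_apply, h, _root_.sylvester, Sy,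
      Matrix.of_apply, Sum.elim_inl, Equiv.apply_symm_apply, if_pos hje]
    rw [mul_comm, coeff_mul_X_pow']
    rcases le_or_gt (a : ℕ) (i : ℕ) with hai | hai
    · rcases le_or_gt (i : ℕ) ((j : ℕ) + d) with hid | hid
      · rw [if_pos ⟨hj ▸ hai, hid⟩, if_pos (hj ▸ hai), coeff_reflect,
          revAt_le (by omega)]
        congr 1
        omega
      · rw [if_neg (by omega), if_pos (hj ▸ hai), coeff_reflect,
          revAt_eq_self_of_lt (by omega), coeff_eq_zero_of_natDegree_lt (by omega)]
    · rw [if_neg (by omega), if_neg (by omega)]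
  · have hj : (j : ℕ) = e + (b : ℕ) := by
      have := congrArg (fun x => ((finSumFinEquiv x : Fin (e + d)) : ℕ)) h
      simpa using this
    have hje : ¬ ((j : ℕ) < e) := by omega
    simp only [Matrix.transpose_apply, Matrix.submatrix_apply, h, _root_.sylvester, Sy,
      Matrix.of_apply, Sum.elim_inr, Equiv.apply_symm_apply, if_neg hje]
    rw [mul_comm, coeff_mul_X_pow']
    have hjb : (j : ℕ) - e = (b : ℕ) := by omega
    rw [hjb]
    rcases le_or_gt (b : ℕ) (i : ℕ) with hai | hai
    · rcases le_or_gt (i : ℕ) ((b : ℕ) + e) with hid | hid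
      · rw [if_pos ⟨hai, hid⟩, if_pos hai, coeff_reflect, revAt_le (by omega)]
        congr 1
        omega
      · rw [if_neg (by omega), if_pos hai, coeff_reflect,
          revAt_eq_self_of_lt (by omega), coeff_eq_zero_of_natDegree_lt (by omega)]
    · rw [if_neg (by omega), if_neg (by omega)]

theorem map_resultantD {S : Type*} [CommRing S] (φ : R →+* S) (d e : ℕ) (f g : R[X]) :
    resultantD d e (f.map φ) (g.map φ) = φ (resultantD d e f g) := by
  rw [resultantD, resultantD, RingHom.map_det]
  congr 1
  ext i j
  simp [_root_.sylvester, RingHom.mapMatrix_apply, apply_ite φ, Polynomial.coeff_map]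

section FieldCore

variable {K : Type*} [Field K]

/-- Truncated inverse of `F` modulo `X^s` (geometric series). -/
noncomputable def Finv (F : K[X]) (s : ℕ) : K[X] :=
  Polynomial.C (F.coeff 0)⁻¹ * ∑ i ∈ Finset.range s, (1 - Polynomial.C (F.coeff 0)⁻¹ * F) ^ i

theorem Finv_spec {F : K[X]} (hF0 : F.coeff 0 ≠ 0) (s : ℕ) :
    F * Finv F s = 1 - (1 - Polynomial.C (F.coeff 0)⁻¹ * F) ^ s := by
  have h1 : F * Finv F s
      = (1 - (1 - Polynomial.C (F.coeff 0)⁻¹ * F)) *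
          ∑ i ∈ Finset.range s, (1 - Polynomial.C (F.coeff 0)⁻¹ * F) ^ i := by
    rw [Finv]
    have : (1 : K[X]) - (1 - Polynomial.C (F.coeff 0)⁻¹ * F)
        = Polynomial.C (F.coeff 0)⁻¹ * F := by ring
    rw [this]; ring
  rw [h1]
  have h2 := geom_sum_mul (1 - Polynomial.C (F.coeff 0)⁻¹ * F) s
  linear_combination -h2

theorem X_pow_dvd_one_sub_mul_Finv {F : K[X]} (hF0 : F.coeff 0 ≠ 0) (s : ℕ) :
    (Polynomial.X : K[X]) ^ s ∣ (1 - F * Finv F s) := by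
  rw [Finv_spec hF0]
  have hX : (Polynomial.X : K[X]) ∣ (1 - Polynomial.C (F.coeff 0)⁻¹ * F) := by
    rw [Polynomial.X_dvd_iff]
    simp [Polynomial.coeff_one, inv_mul_cancel₀ hF0]
  simpa using pow_dvd_pow_of_dvd hX s

/-- Quotient part: `P = uPart F s P * F + X^s * psi F s P` with
`deg (uPart F s P) < s` (when `F.coeff 0 ≠ 0`). -/
noncomputable def uPart (F : K[X]) (s : ℕ) (P : K[X]) : K[X] :=
  (P * Finv F s) %ₘ (Polynomial.X ^ s)

noncomputable def psi (F : K[X]) (s : ℕ) (P : K[X]) : K[X] :=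
  (P - uPart F s P * F) /ₘ (Polynomial.X ^ s)

theorem degree_uPart_lt (F : K[X]) (s : ℕ) (P : K[X]) :
    (uPart F s P).degree < (s : ℕ) := by
  have := Polynomial.degree_modByMonic_lt (P * Finv F s) (Polynomial.monic_X_pow s)
  simpa [uPart, Polynomial.degree_X_pow] using this

theorem X_pow_dvd_sub_uPart {F : K[X]} (hF0 : F.coeff 0 ≠ 0) (s : ℕ) (P : K[X]) :
    (Polynomial.X : K[X]) ^ s ∣ (P - uPart F s P * F) := by
  have h1 : (Polynomial.X : K[X]) ^ s ∣ (P * Finv F s - uPart F s P) := by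
    have h := Polynomial.modByMonic_add_div (P * Finv F s) (Polynomial.X ^ s)
    exact ⟨(P * Finv F s) /ₘ (Polynomial.X ^ s), by rw [uPart]; linear_combination -h⟩
  have h2 : P - uPart F s P * F
      = P * (1 - F * Finv F s) + (P * Finv F s - uPart F s P) * F := by ring
  rw [h2]
  exact dvd_add ((X_pow_dvd_one_sub_mul_Finv hF0 s).mul_left P) (h1.mul_right F)

theorem decomp {F : K[X]} (hF0 : F.coeff 0 ≠ 0) (s : ℕ) (P : K[X]) :
    P = uPart F s P * F + Polynomial.X ^ s * psi F s P := by
  have h := X_pow_dvd_sub_uPart hF0 s P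
  have h2 := Polynomial.modByMonic_add_div (P - uPart F s P * F) (Polynomial.X ^ s)
  rw [(Polynomial.modByMonic_eq_zero_iff_dvd (Polynomial.monic_X_pow s)).mpr h] at h2
  rw [psi]
  linear_combination -h2

theorem decomp_unique {F : K[X]} (hF0 : F.coeff 0 ≠ 0) {s : ℕ} {u₁ w₁ u₂ w₂ : K[X]}
    (h₁ : u₁.degree < (s : ℕ)) (h₂ : u₂.degree < (s : ℕ))
    (h : u₁ * F + Polynomial.X ^ s * w₁ = u₂ * F + Polynomial.X ^ s * w₂) :
    u₁ = u₂ ∧ w₁ = w₂ := by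
  have hd : (Polynomial.X : K[X]) ^ s ∣ (u₁ - u₂) := by
    have hh1 : (u₁ - u₂) * F = Polynomial.X ^ s * (w₂ - w₁) := by linear_combination h
    have hh2 : (Polynomial.X : K[X]) ^ s ∣ (u₁ - u₂) * (F * Finv F s) := by
      have : (u₁ - u₂) * (F * Finv F s) = Polynomial.X ^ s * ((w₂ - w₁) * Finv F s) := by
        rw [← mul_assoc, hh1]; ring
      exact ⟨_, this⟩
    have hh3 : u₁ - u₂
        = (u₁ - u₂) * (F * Finv F s) + (u₁ - u₂) * (1 - F * Finv F s) := by ring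
    rw [hh3]
    exact dvd_add hh2 ((X_pow_dvd_one_sub_mul_Finv hF0 s).mul_left _)
  have hu : u₁ = u₂ := by
    have hdeg : (u₁ - u₂).degree < ((Polynomial.X : K[X]) ^ s).degree := by
      rw [Polynomial.degree_X_pow]
      exact lt_of_le_of_lt (Polynomial.degree_sub_le _ _) (max_lt h₁ h₂)
    have := Polynomial.eq_zero_of_dvd_of_degree_lt hd hdeg
    exact sub_eq_zero.mp this
  refine ⟨hu, ?_⟩
  have hX : (Polynomial.X : K[X]) ^ s ≠ 0 := pow_ne_zero _ Polynomial.X_ne_zero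
  apply mul_left_cancel₀ hX
  rw [hu] at h
  linear_combination h

theorem psi_eq {F : K[X]} (hF0 : F.coeff 0 ≠ 0) {s : ℕ} {P u w : K[X]}
    (hu : u.degree < (s : ℕ)) (h : P = u * F + Polynomial.X ^ s * w) :
    uPart F s P = u ∧ psi F s P = w :=
  decomp_unique hF0 (degree_uPart_lt F s P) hu (by rw [← decomp hF0 s P, ← h])

theorem psi_zero {F : K[X]} (hF0 : F.coeff 0 ≠ 0) (s : ℕ) : psi F s 0 = 0 :=
  (psi_eq hF0 (u := 0) (w := 0)
    (by rw [Polynomial.degree_zero]; exact WithBot.bot_lt_coe _) (by simp)).2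

theorem psi_add {F : K[X]} (hF0 : F.coeff 0 ≠ 0) (s : ℕ) (P Q : K[X]) :
    psi F s (P + Q) = psi F s P + psi F s Q := by
  have hP := decomp hF0 s P
  have hQ := decomp hF0 s Q
  refine (psi_eq hF0 (u := uPart F s P + uPart F s Q) ?_ ?_).2
  · exact lt_of_le_of_lt (Polynomial.degree_add_le _ _)
      (max_lt (degree_uPart_lt F s P) (degree_uPart_lt F s Q))
  · linear_combination hP + hQ

theorem psi_smul {F : K[X]} (hF0 : F.coeff 0 ≠ 0) (s : ℕ) (c : K) (P : K[X]) :
    psi F s (Polynomial.C c * P) = Polynomial.C c * psi F s P := by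
  have hP := decomp hF0 s P
  refine (psi_eq hF0 (u := Polynomial.C c * uPart F s P) ?_ ?_).2
  · refine lt_of_le_of_lt ?_ (degree_uPart_lt F s P)
    rw [← Polynomial.smul_eq_C_mul]
    exact Polynomial.degree_smul_le c (uPart F s P)
  · linear_combination Polynomial.C c * hP

theorem psi_sum {F : K[X]} (hF0 : F.coeff 0 ≠ 0) (s : ℕ) {ι : Type*} (t : Finset ι)
    (f : ι → K[X]) : psi F s (∑ i ∈ t, f i) = ∑ i ∈ t, psi F s (f i) := by
  classical
  induction t using Finset.induction_on with
  | empty => simpa using psi_zero hF0 s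
  | insert _ _ hnot ih =>
    rw [Finset.sum_insert hnot, Finset.sum_insert hnot, psi_add hF0, ih]

theorem natDegree_le_pred_of_degree_lt {p : K[X]} {s : ℕ} (h : p.degree < (s : ℕ)) :
    p.natDegree ≤ s - 1 := by
  rcases eq_or_ne p 0 with rfl | hp
  · simp
  · have := (Polynomial.natDegree_lt_iff_degree_lt hp).mpr h
    omega

theorem pos_of_degree_lt_ne_zero {p : K[X]} {s : ℕ} (h : p.degree < (s : ℕ)) (hp : p ≠ 0) :
    1 ≤ s := by
  by_contra hs
  have hs0 : s = 0 := by omega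
  subst hs0
  have := (Polynomial.natDegree_lt_iff_degree_lt hp).mpr h
  omega

theorem eq_sum_fin_of_degree_lt {s : ℕ} {p : K[X]} (h : p.degree < (s : ℕ)) :
    p = ∑ j : Fin s, Polynomial.C (p.coeff (j : ℕ)) * Polynomial.X ^ (j : ℕ) := by
  rcases eq_or_ne p 0 with rfl | hp
  · simp
  · have hs : 1 ≤ s := pos_of_degree_lt_ne_zero h hp
    have hnd : p.natDegree < s := by
      have := natDegree_le_pred_of_degree_lt h
      omega
    calc p = ∑ i ∈ Finset.range s, (Polynomial.monomial i) (p.coeff i) :=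
        p.as_sum_range' s hnd
      _ = ∑ j : Fin s, Polynomial.C (p.coeff (j : ℕ)) * Polynomial.X ^ (j : ℕ) := by
        rw [Fin.sum_univ_eq_sum_range (fun i => Polynomial.C (p.coeff i) * Polynomial.X ^ i)]
        simp [Polynomial.C_mul_X_pow_eq_monomial]

theorem degree_psi_lt {F : K[X]} (hF0 : F.coeff 0 ≠ 0) {d e : ℕ} {G : K[X]}
    (hFd : F.natDegree ≤ d) (hG : G.natDegree ≤ e) {m : ℕ} (hm : m < d) :
    (psi F e (Polynomial.X ^ m * G)).degree < (d : ℕ) := by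
  set P := Polynomial.X ^ m * G with hP
  by_cases hψ : psi F e P = 0
  · rw [hψ, Polynomial.degree_zero]; exact WithBot.bot_lt_coe _
  have hdec := decomp hF0 e P
  have h1 : (Polynomial.X : K[X]) ^ e * psi F e P = P - uPart F e P * F := by
    linear_combination -hdec
  have hXψ : ((Polynomial.X : K[X]) ^ e * psi F e P).natDegree ≤ e + d - 1 := by
    rw [h1]
    refine le_trans (Polynomial.natDegree_sub_le _ _) (max_le ?_ ?_)
    · refine le_trans Polynomial.natDegree_mul_le ?_
      rw [Polynomial.natDegree_X_pow]
      omega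
    · by_cases hu : uPart F e P = 0
      · simp [hu]
      · have he : 1 ≤ e := pos_of_degree_lt_ne_zero (degree_uPart_lt F e P) hu
        have h2 : (uPart F e P).natDegree ≤ e - 1 :=
          natDegree_le_pred_of_degree_lt (degree_uPart_lt F e P)
        refine le_trans Polynomial.natDegree_mul_le ?_
        omega
  have hXne : (Polynomial.X : K[X]) ^ e ≠ 0 := pow_ne_zero _ Polynomial.X_ne_zero
  rw [Polynomial.natDegree_mul hXne hψ, Polynomial.natDegree_X_pow] at hXψ
  refine (Polynomial.natDegree_lt_iff_degree_lt hψ).mp ?_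
  omega

theorem psi_psi {F : K[X]} (hF0 : F.coeff 0 ≠ 0) {e e' : ℕ} {H : K[X]}
    (hH : H.natDegree ≤ e') (P : K[X]) :
    psi F (e + e') (P * H) = psi F e' (psi F e P * H) := by
  have hP := decomp hF0 e P
  have hw := decomp hF0 e' (psi F e P * H)
  refine (psi_eq hF0 (u := uPart F e P * H + Polynomial.X ^ e * uPart F e' (psi F e P * H))
    ?_ ?_).2
  · refine lt_of_le_of_lt (Polynomial.degree_add_le _ _) (max_lt ?_ ?_)
    · by_cases h0 : uPart F e P * H = 0
      · rw [h0, Polynomial.degree_zero]; exact WithBot.bot_lt_coe _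
      · have hu0 : uPart F e P ≠ 0 := left_ne_zero_of_mul h0
        have he : 1 ≤ e := pos_of_degree_lt_ne_zero (degree_uPart_lt F e P) hu0
        have h2 : (uPart F e P * H).natDegree ≤ e - 1 + e' :=
          le_trans Polynomial.natDegree_mul_le
            (add_le_add (natDegree_le_pred_of_degree_lt (degree_uPart_lt F e P)) hH)
        refine lt_of_le_of_lt (Polynomial.degree_le_natDegree) (Nat.cast_lt.mpr ?_)
        omega
    · by_cases h0 : uPart F e' (psi F e P * H) = 0
      · rw [h0, mul_zero, Polynomial.degree_zero]; exact WithBot.bot_lt_coe _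
      · have he : 1 ≤ e' := pos_of_degree_lt_ne_zero (degree_uPart_lt F e' _) h0
        have h2 : ((Polynomial.X : K[X]) ^ e * uPart F e' (psi F e P * H)).natDegree
            ≤ e + (e' - 1) := by
          refine le_trans Polynomial.natDegree_mul_le ?_
          rw [Polynomial.natDegree_X_pow]
          exact add_le_add le_rfl (natDegree_le_pred_of_degree_lt (degree_uPart_lt F e' _))
        refine lt_of_le_of_lt (Polynomial.degree_le_natDegree) (Nat.cast_lt.mpr ?_)
        omega
  · linear_combination H * hP + (Polynomial.X : K[X]) ^ e * hw

theorem coeff_mul_eq_sum {s : ℕ} {u : K[X]} (hu : u.degree < (s : ℕ)) (F : K[X]) (n : ℕ) :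
    ∑ j : Fin s, (Polynomial.X ^ (j : ℕ) * F).coeff n * u.coeff (j : ℕ) = (u * F).coeff n := by
  conv_rhs => rw [eq_sum_fin_of_degree_lt hu]
  rw [Finset.sum_mul, Polynomial.finset_sum_coeff]
  refine Finset.sum_congr rfl fun j _ => ?_
  rw [mul_assoc, Polynomial.coeff_C_mul]
  ring

theorem sum_coeff_X_pow_shift {s d : ℕ} (w : K[X]) (n : ℕ) (hn : n < s + d) :
    ∑ k : Fin d, ((Polynomial.X : K[X]) ^ (k : ℕ) * Polynomial.X ^ s).coeff n * w.coeff (k : ℕ)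
      = (Polynomial.X ^ s * w).coeff n := by
  rcases lt_or_ge n s with h | h
  · rw [mul_comm, Polynomial.coeff_mul_X_pow', if_neg (not_le.mpr h)]
    refine Finset.sum_eq_zero fun k _ => ?_
    rw [← pow_add, Polynomial.coeff_X_pow, if_neg (by omega), zero_mul]
  · have hk : n - s < d := by omega
    rw [mul_comm, Polynomial.coeff_mul_X_pow', if_pos h]
    rw [Finset.sum_eq_single (⟨n - s, hk⟩ : Fin d)]
    · rw [← pow_add, Polynomial.coeff_X_pow, if_pos (by simp; omega), one_mul]
    · intro k _ hne
      rw [← pow_add, Polynomial.coeff_X_pow, if_neg ?_, zero_mul]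
      intro hEq
      exact hne (Fin.ext (show (k : ℕ) = n - s by omega))
    · intro h'
      exact absurd (Finset.mem_univ _) h'

theorem Sy_eq_mul {F : K[X]} (hF0 : F.coeff 0 ≠ 0) (s d : ℕ) (B : K[X]) :
    Sy s d F B =
      Sy s d F (Polynomial.X ^ s) *
        Matrix.fromBlocks (1 : Matrix (Fin s) (Fin s) K)
          (Matrix.of fun (j : Fin s) (m : Fin d) =>
            (uPart F s (Polynomial.X ^ (m : ℕ) * B)).coeff (j : ℕ))
          (0 : Matrix (Fin d) (Fin s) K)
          (Matrix.of fun (k : Fin d) (m : Fin d) =>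
            (psi F s (Polynomial.X ^ (m : ℕ) * B)).coeff (k : ℕ)) := by
  ext r c
  rw [Matrix.mul_apply, Fintype.sum_sum_type]
  rcases c with i | m
  · simp only [Matrix.fromBlocks_apply₁₁, Matrix.fromBlocks_apply₂₁, Matrix.one_apply,
      Matrix.zero_apply, mul_ite, mul_one, mul_zero, Finset.sum_ite_eq', Finset.mem_univ,
      if_true, Finset.sum_const_zero, add_zero]
    rfl
  · have hdec := decomp hF0 s (Polynomial.X ^ (m : ℕ) * B)
    simp only [Matrix.fromBlocks_apply₁₂, Matrix.fromBlocks_apply₂₂, Matrix.of_apply]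
    have hrow : ((finSumFinEquiv r : Fin (s + d)) : ℕ) < s + d := (finSumFinEquiv r).isLt
    show (Polynomial.X ^ (m : ℕ) * B).coeff ((finSumFinEquiv r : Fin (s + d)) : ℕ) = _
    conv_lhs => rw [hdec]
    rw [Polynomial.coeff_add]
    congr 1
    · exact (coeff_mul_eq_sum (degree_uPart_lt F s _) F _).symm
    · exact (sum_coeff_X_pow_shift _ _ hrow).symm

theorem det_Sy_X_pow (F : K[X]) (s d : ℕ) :
    (Sy s d F (Polynomial.X ^ s)).det = F.coeff 0 ^ s := by
  rw [← Matrix.det_submatrix_equiv_self finSumFinEquiv.symm (Sy s d F (Polynomial.X ^ s))]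
  have htri : ((Sy s d F (Polynomial.X ^ s)).submatrix finSumFinEquiv.symm
      finSumFinEquiv.symm).BlockTriangular OrderDual.toDual := by
    intro p q hpq
    have hpq' : (p : ℕ) < (q : ℕ) := hpq
    rw [Matrix.submatrix_apply]
    rcases h : finSumFinEquiv.symm q with a | b
    · have hq : (q : ℕ) = (a : ℕ) := by
        have := congrArg (fun x => ((finSumFinEquiv x : Fin (s + d)) : ℕ)) h
        simpa using this
      simp only [Sy, Matrix.of_apply, Sum.elim_inl]
      rw [Equiv.apply_symm_apply, mul_comm, Polynomial.coeff_mul_X_pow',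
        if_neg (by omega)]
    · have hq : (q : ℕ) = s + (b : ℕ) := by
        have := congrArg (fun x => ((finSumFinEquiv x : Fin (s + d)) : ℕ)) h
        simpa using this
      simp only [Sy, Matrix.of_apply, Sum.elim_inr]
      rw [Equiv.apply_symm_apply, ← pow_add, Polynomial.coeff_X_pow, if_neg (by omega)]
  rw [Matrix.det_of_lowerTriangular _ htri,
    ← Equiv.prod_comp finSumFinEquiv
      (fun i => ((Sy s d F (Polynomial.X ^ s)).submatrix finSumFinEquiv.symm
        finSumFinEquiv.symm) i i),
    Fintype.prod_sum_type]
  have h1 : ∀ a : Fin s, Sy s d F (Polynomial.X ^ s) (Sum.inl a) (Sum.inl a) = F.coeff 0 := by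
    intro a
    simp only [Sy, Matrix.of_apply, Sum.elim_inl]
    rw [mul_comm, Polynomial.coeff_mul_X_pow']
    simp
  have h2 : ∀ b : Fin d, Sy s d F (Polynomial.X ^ s) (Sum.inr b) (Sum.inr b) = 1 := by
    intro b
    simp only [Sy, Matrix.of_apply, Sum.elim_inr]
    rw [← pow_add, Polynomial.coeff_X_pow, if_pos (by simp [Nat.add_comm])]
  simp [h1, h2]

/-- The matrix of "multiplication by `B` followed by reduction". -/
noncomputable def PsiM (F : K[X]) (s d : ℕ) (B : K[X]) : Matrix (Fin d) (Fin d) K :=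
  Matrix.of fun k m => (psi F s (Polynomial.X ^ (m : ℕ) * B)).coeff (k : ℕ)

theorem det_Sy {F : K[X]} (hF0 : F.coeff 0 ≠ 0) (s d : ℕ) (B : K[X]) :
    (Sy s d F B).det = F.coeff 0 ^ s * (PsiM F s d B).det := by
  rw [Sy_eq_mul hF0 s d B, Matrix.det_mul, det_Sy_X_pow,
    Matrix.det_fromBlocks_zero₂₁, Matrix.det_one, one_mul]
  rfl

theorem PsiM_mul {F : K[X]} (hF0 : F.coeff 0 ≠ 0) {d e e' : ℕ} {G H : K[X]}
    (hFd : F.natDegree ≤ d) (hG : G.natDegree ≤ e) (hH : H.natDegree ≤ e') :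
    PsiM F (e + e') d (G * H) = PsiM F e' d H * PsiM F e d G := by
  ext k m
  rw [Matrix.mul_apply]
  show (psi F (e + e') (Polynomial.X ^ (m : ℕ) * (G * H))).coeff (k : ℕ) = _
  have h1 : Polynomial.X ^ (m : ℕ) * (G * H) = (Polynomial.X ^ (m : ℕ) * G) * H := by ring
  rw [h1, psi_psi hF0 hH]
  have hwdeg : (psi F e (Polynomial.X ^ (m : ℕ) * G)).degree < (d : ℕ) :=
    degree_psi_lt hF0 hFd hG m.isLt
  conv_lhs => rw [eq_sum_fin_of_degree_lt hwdeg, Finset.sum_mul]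
  simp only [mul_assoc]
  rw [psi_sum hF0, Polynomial.finset_sum_coeff]
  refine Finset.sum_congr rfl fun l _ => ?_
  rw [psi_smul hF0, Polynomial.coeff_C_mul]
  show (psi F e (Polynomial.X ^ (m : ℕ) * G)).coeff (l : ℕ) *
      (psi F e' (Polynomial.X ^ (l : ℕ) * H)).coeff (k : ℕ) =
    (psi F e' (Polynomial.X ^ (l : ℕ) * H)).coeff (k : ℕ) *
      (psi F e (Polynomial.X ^ (m : ℕ) * G)).coeff (l : ℕ)
  ring

theorem Sy_det_mul {F : K[X]} (hF0 : F.coeff 0 ≠ 0) {d e e' : ℕ} {G H : K[X]}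
    (hFd : F.natDegree ≤ d) (hG : G.natDegree ≤ e) (hH : H.natDegree ≤ e') :
    (Sy (e + e') d F (G * H)).det = (Sy e d F G).det * (Sy e' d F H).det := by
  rw [det_Sy hF0, det_Sy hF0, det_Sy hF0, PsiM_mul hF0 hFd hG hH, Matrix.det_mul, pow_add]
  ring

end FieldCore

theorem natDegree_reflect_le {R : Type*} [CommRing R] {N : ℕ} {p : R[X]}
    (hp : p.natDegree ≤ N) : (Polynomial.reflect N p).natDegree ≤ N := by
  rw [Polynomial.natDegree_le_iff_coeff_eq_zero]
  intro M hM
  rw [Polynomial.coeff_reflect, Polynomial.revAt_eq_self_of_lt hM]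
  exact Polynomial.coeff_eq_zero_of_natDegree_lt (lt_of_le_of_lt hp hM)

theorem resultantD_mul_right_field {K : Type*} [Field K] {d e e' : ℕ} {f g h : K[X]}
    (hlc : f.coeff d ≠ 0) (hf : f.natDegree ≤ d) (hg : g.natDegree ≤ e)
    (hh : h.natDegree ≤ e') :
    resultantD d (e + e') f (g * h) = resultantD d e f g * resultantD d e' f h := by
  have hgh : (g * h).natDegree ≤ e + e' :=
    le_trans Polynomial.natDegree_mul_le (add_le_add hg hh)
  rw [resultantD_eq_det_Sy hf hgh, resultantD_eq_det_Sy hf hg, resultantD_eq_det_Sy hf hh,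
    Polynomial.reflect_mul g h hg hh]
  have hF0 : (Polynomial.reflect d f).coeff 0 ≠ 0 := by
    rw [Polynomial.coeff_reflect, Polynomial.revAt_le (Nat.zero_le d)]
    simpa using hlc
  exact Sy_det_mul hF0 (natDegree_reflect_le hf) (natDegree_reflect_le hg)
    (natDegree_reflect_le hh)

section Generic

theorem coeff_gen {A : Type*} [CommRing A] (n : ℕ) (c : ℕ → A) (k : ℕ) (hk : k ≤ n) :
    (∑ i ∈ Finset.range (n + 1), Polynomial.C (c i) * Polynomial.X ^ i).coeff k = c k := by
  rw [Polynomial.finset_sum_coeff]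
  rw [Finset.sum_eq_single k]
  · rw [Polynomial.coeff_C_mul, Polynomial.coeff_X_pow, if_pos rfl, mul_one]
  · intro i _ hik
    rw [Polynomial.coeff_C_mul, Polynomial.coeff_X_pow, if_neg (fun hc => hik hc.symm), mul_zero]
  · intro hk'
    exact absurd (Finset.mem_range.mpr (by omega)) hk'

theorem natDegree_gen_le {A : Type*} [CommRing A] (n : ℕ) (c : ℕ → A) :
    (∑ i ∈ Finset.range (n + 1), Polynomial.C (c i) * Polynomial.X ^ i).natDegree ≤ n := by
  refine Polynomial.natDegree_sum_le_of_forall_le _ _ fun i hi => ?_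
  exact le_trans (Polynomial.natDegree_C_mul_X_pow_le _ _) (by
    have := Finset.mem_range.mp hi; omega)

theorem map_gen {A R : Type*} [CommRing A] [CommRing R] (n : ℕ) (c : ℕ → A) (p : R[X])
    (φ : A →+* R) (hp : p.natDegree ≤ n) (hφ : ∀ i ≤ n, φ (c i) = p.coeff i) :
    (∑ i ∈ Finset.range (n + 1), Polynomial.C (c i) * Polynomial.X ^ i).map φ = p := by
  rw [← Polynomial.coe_mapRingHom, map_sum]
  conv_rhs => rw [p.as_sum_range' (n + 1) (by omega)]
  refine Finset.sum_congr rfl fun i hi => ?_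
  simp only [Polynomial.coe_mapRingHom, Polynomial.map_mul, Polynomial.map_C,
    Polynomial.map_pow, Polynomial.map_X]
  rw [hφ i (by have := Finset.mem_range.mp hi; omega), Polynomial.C_mul_X_pow_eq_monomial]

theorem resultantD_mul_right {R : Type*} [CommRing R] {d e e' : ℕ} (f g h : R[X])
    (hf : f.natDegree ≤ d) (hg : g.natDegree ≤ e) (hh : h.natDegree ≤ e') :
    resultantD d (e + e') f (g * h) = resultantD d e f g * resultantD d e' f h := by
  classical
  set A := MvPolynomial (ℕ ⊕ ℕ ⊕ ℕ) ℤ with hA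
  let KK := FractionRing A
  set cf : ℕ → A := fun i => MvPolynomial.X (Sum.inl i) with hcf
  set cg : ℕ → A := fun i => MvPolynomial.X (Sum.inr (Sum.inl i)) with hcg
  set ch : ℕ → A := fun i => MvPolynomial.X (Sum.inr (Sum.inr i)) with hch
  set fgen : Polynomial A :=
    ∑ i ∈ Finset.range (d + 1), Polynomial.C (cf i) * Polynomial.X ^ i with hfgen
  set ggen : Polynomial A :=
    ∑ i ∈ Finset.range (e + 1), Polynomial.C (cg i) * Polynomial.X ^ i with hggen
  set hgen : Polynomial A :=
    ∑ i ∈ Finset.range (e' + 1), Polynomial.C (ch i) * Polynomial.X ^ i with hhgen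
  have hinj : Function.Injective (algebraMap A KK) := IsFractionRing.injective A KK
  have hgeneric : resultantD d (e + e') fgen (ggen * hgen)
      = resultantD d e fgen ggen * resultantD d e' fgen hgen := by
    apply hinj
    rw [map_mul, ← map_resultantD (algebraMap A KK), ← map_resultantD (algebraMap A KK),
      ← map_resultantD (algebraMap A KK), Polynomial.map_mul]
    apply resultantD_mul_right_field
    · rw [Polynomial.coeff_map, hfgen, coeff_gen d cf d le_rfl]
      intro hz
      refine MvPolynomial.X_ne_zero (R := ℤ) (Sum.inl d : ℕ ⊕ ℕ ⊕ ℕ) (hinj ?_)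
      rw [map_zero]
      exact hz
    · exact le_trans Polynomial.natDegree_map_le (natDegree_gen_le d cf)
    · exact le_trans Polynomial.natDegree_map_le (natDegree_gen_le e cg)
    · exact le_trans Polynomial.natDegree_map_le (natDegree_gen_le e' ch)
  let val : ℕ ⊕ ℕ ⊕ ℕ → R :=
    Sum.elim (fun i => f.coeff i) (Sum.elim (fun i => g.coeff i) (fun i => h.coeff i))
  let φ : A →+* R := MvPolynomial.eval₂Hom (Int.castRingHom R) val
  have hfmap : fgen.map φ = f := map_gen d cf f φ hf (fun i _ => by
    exact MvPolynomial.eval₂Hom_X' _ _ _)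
  have hgmap : ggen.map φ = g := map_gen e cg g φ hg (fun i _ => by
    exact MvPolynomial.eval₂Hom_X' _ _ _)
  have hhmap : hgen.map φ = h := map_gen e' ch h φ hh (fun i _ => by
    exact MvPolynomial.eval₂Hom_X' _ _ _)
  have hfin := congrArg φ hgeneric
  rw [map_mul, ← map_resultantD φ, ← map_resultantD φ, ← map_resultantD φ,
    Polynomial.map_mul, hfmap, hgmap, hhmap] at hfin
  exact hfin

end Generic

end ConchAux

theorem ConchAux.natDegree_aeval_le_s3 {k : Type*} [CommSemiring k] {B : Type*} [CommSemiring B]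
    [Algebra k B] {σ : Type*} {n : ℕ} {P : MvPolynomial σ k} (hP : P.IsHomogeneous n)
    (v : σ → Polynomial B) (hv : ∀ i, (v i).natDegree ≤ 1) :
    (MvPolynomial.aeval v P).natDegree ≤ n := by
  rw [MvPolynomial.aeval_def, MvPolynomial.eval₂_eq]
  refine Polynomial.natDegree_sum_le_of_forall_le _ _ fun m hm => ?_
  refine le_trans Polynomial.natDegree_mul_le ?_
  have h1 : ((algebraMap k (Polynomial B)) (MvPolynomial.coeff m P)).natDegree = 0 := by
    rw [Polynomial.algebraMap_apply]
    exact Polynomial.natDegree_C _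
  rw [h1, zero_add]
  have hdeg := hP (MvPolynomial.mem_support_iff.mp hm)
  have hsum : ∑ i ∈ m.support, m i = n := by
    have h2 : Finsupp.degree m = n := by
      rw [Finsupp.degree_eq_weight_one]
      exact_mod_cast hdeg
    simpa [Finsupp.degree_apply] using h2
  calc (∏ i ∈ m.support, v i ^ m i).natDegree
      ≤ ∑ i ∈ m.support, (v i ^ m i).natDegree := Polynomial.natDegree_prod_le _ _
    _ ≤ ∑ i ∈ m.support, m i := by
        refine Finset.sum_le_sum fun i _ => ?_
        exact le_trans Polynomial.natDegree_pow_le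
          (by simpa using Nat.mul_le_mul_left (m i) (hv i))
    _ = n := hsum

theorem ConchAux.natDegree_conchSubB_le {k : Type*} [CommRing k] {d : ℕ}
    {F : MvPolynomial (Fin 3) k} (hF : F.IsHomogeneous d) : (conchSubB F).natDegree ≤ d := by
  refine ConchAux.natDegree_aeval_le_s3 hF _ fun i => ?_
  fin_cases i
  · refine le_trans Polynomial.natDegree_mul_le ?_
    have h1 : ((1 : Polynomial (MvPolynomial (Fin 3) k)) - Polynomial.X).natDegree ≤ 1 :=
      le_trans (Polynomial.natDegree_sub_le _ _)
        (max_le (by rw [Polynomial.natDegree_one]; omega) Polynomial.natDegree_X_le)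
    rw [Polynomial.natDegree_C, add_zero]
    exact h1
  · refine le_trans Polynomial.natDegree_mul_le ?_
    have h1 : ((1 : Polynomial (MvPolynomial (Fin 3) k)) - Polynomial.X).natDegree ≤ 1 :=
      le_trans (Polynomial.natDegree_sub_le _ _)
        (max_le (by rw [Polynomial.natDegree_one]; omega) Polynomial.natDegree_X_le)
    rw [Polynomial.natDegree_C, add_zero]
    exact h1
  · show (Polynomial.C (X 2 : MvPolynomial (Fin 3) k)).natDegree ≤ 1
    rw [Polynomial.natDegree_C]
    omega

theorem ConchAux.natDegree_conchSubC_le {k : Type*} [CommRing k] {d : ℕ}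
    {G : MvPolynomial (Fin 3) k} (hG : G.IsHomogeneous d) : (conchSubC G).natDegree ≤ d := by
  refine ConchAux.natDegree_aeval_le_s3 hG _ fun i => ?_
  fin_cases i
  · refine le_trans Polynomial.natDegree_mul_le ?_
    rw [Polynomial.natDegree_C, add_zero]
    exact Polynomial.natDegree_X_le
  · refine le_trans Polynomial.natDegree_mul_le ?_
    rw [Polynomial.natDegree_C, add_zero]
    exact Polynomial.natDegree_X_le
  · show (Polynomial.C (X 2 : MvPolynomial (Fin 3) k)).natDegree ≤ 1
    rw [Polynomial.natDegree_C]
    omega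

/-- multiplicativity of the conchoidal resultant in the second
argument: `R(F, G₁G₂) = c · R(F,G₁) · R(F,G₂)` for a nonzero constant `c`. -/
theorem conchRes_mul_right {k : Type*} [Field k] (d δ₁ δ₂ : ℕ)
    (F G₁ G₂ : MvPolynomial (Fin 3) k)
    (hF : F.IsHomogeneous d) (hG₁ : G₁.IsHomogeneous δ₁) (hG₂ : G₂.IsHomogeneous δ₂) :
    ∃ c : k, c ≠ 0 ∧
      conchRes d (δ₁ + δ₂) F (G₁ * G₂) =
        MvPolynomial.C c * (conchRes d δ₁ F G₁ * conchRes d δ₂ F G₂) := by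
  refine ⟨1, one_ne_zero, ?_⟩
  rw [map_one, one_mul]
  have hmul : conchSubC (G₁ * G₂) = conchSubC G₁ * conchSubC G₂ := by
    unfold conchSubC
    rw [map_mul]
  rw [conchRes, conchRes, conchRes, hmul]
  exact ConchAux.resultantD_mul_right _ _ _ (ConchAux.natDegree_conchSubB_le hF)
    (ConchAux.natDegree_conchSubC_le hG₁) (ConchAux.natDegree_conchSubC_le hG₂)
end

section
/- Let F = ax + by + cz and G = a'x + b'y + c'z be two linear forms over a field k. The conchoidal resultant R(F,G), i.e. the resultant in (λ,μ) of F((μ-λ)x,(μ-λ)y,μz) and G(λx,λy,μz), equals -[(ax+by+cz)(a'x+b'y+c'z) - cc'z²]. -/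
open MvPolynomial

/-- the conchoidal resultant of two lines
`F = ax + by + cz`, `G = a'x + b'y + c'z` equals `-[(F)(G) - cc'z²]`. -/
theorem conchRes_two_lines {k : Type*} [Field k] (a b c a' b' c' : k) :
    conchRes 1 1
        (MvPolynomial.C a * X 0 + MvPolynomial.C b * X 1 + MvPolynomial.C c * X 2)
        (MvPolynomial.C a' * X 0 + MvPolynomial.C b' * X 1 + MvPolynomial.C c' * X 2) =
      -((MvPolynomial.C a * X 0 + MvPolynomial.C b * X 1 + MvPolynomial.C c * X 2) *
          (MvPolynomial.C a' * X 0 + MvPolynomial.C b' * X 1 + MvPolynomial.C c' * X 2) -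
        (MvPolynomial.C c * MvPolynomial.C c') * (X 2 : MvPolynomial (Fin 3) k) ^ 2) := by
  
  have h2 : ((1:ℕ)+1) = 2 := rfl
  simp only [conchRes, resultantD, conchSubB, conchSubC]
  rw [Matrix.det_fin_two]
  simp [sylvester, map_add, map_mul, aeval_C, aeval_X, Matrix.cons_val_zero,
    Matrix.cons_val_one, Polynomial.coeff_one, Polynomial.coeff_sub,
    Polynomial.coeff_add, Polynomial.coeff_mul_C, Polynomial.coeff_C,
    Polynomial.coeff_X, algebraMap_eq, mul_sub, sub_mul]
  ring
end

section
/- Let F = ax + by + cz be a linear form and G ∈ k[x,y,z] homogeneous of degree δ ≥ 1. Then the conchoidal resultant R(F,G) (the resultant in (λ,μ) of F((μ-λ)x,(μ-λ)y,μz) and G(λx,λy,μz)) equals, up to sign, G(x(ax+by+cz), y(ax+by+cz), (ax+by)z). -/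
open MvPolynomial

section ConchAux

variable {R : Type*} [CommRing R] (f g : Polynomial R)

private lemma syl_sub_succ (e : ℕ) :
    (sylvester 1 (e+1) f g).submatrix Fin.succ Fin.succ = sylvester 1 e f g := by
  ext i j
  have hi := i.isLt
  have hj := j.isLt
  simp only [Matrix.submatrix_apply, sylvester, Matrix.of_apply, Fin.val_succ]
  split_ifs <;>
    first
      | rfl
      | (exfalso; omega)
      | (congr 1; omega)

private lemma syl_sub_last (e : ℕ) :
    ((sylvester 1 (e+1) f g).submatrix (Fin.last (e+1)).succAbove Fin.succ).det
      = (f.coeff 0)^(e+1) := by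
  have hdiag : ∀ i : Fin (e+1),
      ((sylvester 1 (e+1) f g).submatrix (Fin.last (e+1)).succAbove Fin.succ) i i
        = f.coeff 0 := by
    intro i
    have hi := i.isLt
    simp only [Matrix.submatrix_apply, Fin.succAbove_last, sylvester, Matrix.of_apply,
      Fin.coe_castSucc, Fin.val_succ]
    rw [if_pos (by omega), if_pos (by omega)]
    congr 1; omega
  rw [Matrix.det_of_lowerTriangular]
  · rw [Finset.prod_congr rfl fun i _ => hdiag i]
    simp
  · intro i j hij
    have hi := i.isLt
    have hj := j.isLt
    have hij' : (i:ℕ) < (j:ℕ) := hij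
    simp only [Matrix.submatrix_apply, Fin.succAbove_last, sylvester, Matrix.of_apply,
      Fin.coe_castSucc, Fin.val_succ]
    rw [if_pos (by omega), if_neg (by omega)]

private lemma syl_zero : resultantD 1 0 f g = g.coeff 0 := by
  have h : (sylvester 1 0 f g) 0 0 = g.coeff 0 := by
    simp [sylvester]
  rw [resultantD]
  rw [show (sylvester 1 0 f g).det = sylvester 1 0 f g 0 0 from Matrix.det_fin_one _, h]

private lemma syl_rec (e : ℕ) :
    resultantD 1 (e+1) f g
      = f.coeff 1 * resultantD 1 e f g
        + (-1)^(e+1) * g.coeff (e+1) * (f.coeff 0)^(e+1) := by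
  rw [resultantD, Matrix.det_succ_column_zero, Fin.sum_univ_succ]
  rw [Finset.sum_eq_single (Fin.last e)]
  · have h0 : (sylvester 1 (e+1) f g) 0 0 = f.coeff 1 := by
      simp [sylvester]
    have hlast : (sylvester 1 (e+1) f g) (Fin.last e).succ 0 = g.coeff (e+1) := by
      simp only [sylvester, Matrix.of_apply, Fin.val_succ, Fin.val_last, Fin.val_zero]
      rw [if_neg (by omega)]
      refine Eq.trans (if_pos (by omega)) ?_
      congr 1; omega
    rw [h0, hlast]
    rw [show Fin.succAbove (0 : Fin (e+1+1)) = Fin.succ from Fin.succAbove_zero]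
    rw [syl_sub_succ]
    have hsub : (Fin.last e).succ = Fin.last (e+1) := rfl
    rw [hsub, syl_sub_last]
    rw [resultantD]
    simp only [Fin.val_zero, Fin.val_last, pow_zero]
    ring
  · intro i _ hne
    have : (sylvester 1 (e+1) f g) i.succ 0 = 0 := by
      have hi := i.isLt
      have hne' : (i:ℕ) ≠ e := fun h => hne (by ext; simp [h])
      simp only [sylvester, Matrix.of_apply, Fin.val_succ, Fin.val_zero]
      rw [if_pos (by omega)]
      exact if_neg (show ¬ ((i:ℕ) + 1 ≤ 0 ∧ 0 ≤ (i:ℕ) + 1 + 1) by omega)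
    simp [this]
  · intro h
    exact absurd (Finset.mem_univ _) h

private lemma syl_formula (e : ℕ) :
    resultantD 1 e f g
      = ∑ m ∈ Finset.range (e+1),
          (-1)^m * g.coeff m * (f.coeff 0)^m * (f.coeff 1)^(e-m) := by
  induction e with
  | zero => simp [syl_zero]
  | succ e ih =>
    rw [syl_rec, ih]
    conv_rhs => rw [Finset.sum_range_succ]
    have hmain : ∑ m ∈ Finset.range (e+1),
        (-1)^m * g.coeff m * (f.coeff 0)^m * (f.coeff 1)^(e+1-m)
      = f.coeff 1 * ∑ m ∈ Finset.range (e+1),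
          (-1)^m * g.coeff m * (f.coeff 0)^m * (f.coeff 1)^(e-m) := by
      rw [Finset.mul_sum]
      refine Finset.sum_congr rfl fun m hm => ?_
      have hm' : m ≤ e := Nat.lt_succ_iff.mp (Finset.mem_range.mp hm)
      rw [show e + 1 - m = (e - m) + 1 by omega, pow_succ]
      ring
    rw [hmain, Nat.sub_self, pow_zero, mul_one]

end ConchAux

section ConchAux2

variable {k : Type*} [CommRing k] (a b c : k)

private lemma conch_hB0 : (conchSubB (C a * X 0 + C b * X 1 + C c * X 2)).coeff 0
    = C a * X 0 + C b * X 1 + C c * X 2 := by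
  simp [conchSubB, sub_mul, algebraMap_eq]

private lemma conch_hB1 : (conchSubB (C a * X 0 + C b * X 1 + C c * X 2)).coeff 1
    = -(C a * X 0 + C b * X 1) := by
  simp [conchSubB, sub_mul, algebraMap_eq]
  ring

private lemma conch_hmono (s : Fin 3 →₀ ℕ) (cc : k) :
    (monomial s cc : MvPolynomial (Fin 3) k)
      = MvPolynomial.C cc * (X 0 ^ s 0 * X 1 ^ s 1 * X 2 ^ s 2) := by
  rw [monomial_eq, Finsupp.prod_fintype _ _ (fun i => pow_zero _), Fin.prod_univ_three]

private lemma conch_hC (s : Fin 3 →₀ ℕ) (cc : k) (m : ℕ) :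
    (conchSubC (monomial s cc)).coeff m
      = if s 0 + s 1 = m then monomial s cc else 0 := by
  rw [conchSubC, aeval_monomial, Finsupp.prod_fintype _ _ (fun i => pow_zero _),
    Fin.prod_univ_three]
  simp only [Matrix.cons_val_zero, Matrix.cons_val_one, Matrix.head_cons,
    Matrix.cons_val_two, Matrix.tail_cons]
  rw [mul_pow, mul_pow, ← Polynomial.C_pow, ← Polynomial.C_pow, ← Polynomial.C_pow]
  have hp : (algebraMap k (Polynomial (MvPolynomial (Fin 3) k))) cc *
        (Polynomial.X ^ s 0 * Polynomial.C (X 0 ^ s 0) *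
          (Polynomial.X ^ s 1 * Polynomial.C (X 1 ^ s 1)) * Polynomial.C (X 2 ^ s 2))
      = Polynomial.C (monomial s cc) * Polynomial.X ^ (s 0 + s 1) := by
    rw [conch_hmono, Polynomial.algebraMap_apply, map_mul, map_mul, map_mul, pow_add]
    rw [show algebraMap k (MvPolynomial (Fin 3) k) cc = MvPolynomial.C cc from rfl]
    ring
  rw [hp, Polynomial.coeff_C_mul, Polynomial.coeff_X_pow]
  simp only [mul_ite, mul_one, mul_zero]
  congr 1
  simp [eq_comm]

private lemma conch_keymono (δ : ℕ) (s : Fin 3 →₀ ℕ) (hs : s 0 + s 1 + s 2 = δ) (cc : k) :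
    ∑ m ∈ Finset.range (δ+1),
        (-1)^m * (conchSubC (monomial s cc)).coeff m
          * (C a * X 0 + C b * X 1 + C c * X 2)^m
          * (-(C a * X 0 + C b * X 1))^(δ-m)
      = (-1)^δ * aeval
          ![X 0 * (C a * X 0 + C b * X 1 + C c * X 2),
            X 1 * (C a * X 0 + C b * X 1 + C c * X 2),
            (C a * X 0 + C b * X 1) * X 2] (monomial s cc) := by
  simp only [conch_hC]
  rw [Finset.sum_eq_single (s 0 + s 1)]
  · rw [if_pos rfl, show δ - (s 0 + s 1) = s 2 by omega]
    rw [aeval_monomial, Finsupp.prod_fintype _ _ (fun i => pow_zero _), Fin.prod_univ_three]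
    simp only [Matrix.cons_val_zero, Matrix.cons_val_one, Matrix.head_cons,
      Matrix.cons_val_two, Matrix.tail_cons]
    rw [conch_hmono, show algebraMap k (MvPolynomial (Fin 3) k) cc = MvPolynomial.C cc from rfl]
    rw [neg_pow (C a * X 0 + C b * X 1) (s 2),
      show ((-1 : MvPolynomial (Fin 3) k))^δ = (-1)^(s 0 + s 1) * (-1)^(s 2) by
        rw [← pow_add, hs]]
    rw [mul_pow, mul_pow, mul_pow]
    ring
  · intro m _ hne
    rw [if_neg (fun h => hne h.symm)]
    ring
  · intro h
    exact absurd (Finset.mem_range.mpr (by omega)) h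

private lemma conch_key (δ : ℕ) (G : MvPolynomial (Fin 3) k) (hG : G.IsHomogeneous δ) :
    ∑ m ∈ Finset.range (δ+1),
        (-1)^m * (conchSubC G).coeff m
          * (C a * X 0 + C b * X 1 + C c * X 2)^m
          * (-(C a * X 0 + C b * X 1))^(δ-m)
      = (-1)^δ * aeval
          ![X 0 * (C a * X 0 + C b * X 1 + C c * X 2),
            X 1 * (C a * X 0 + C b * X 1 + C c * X 2),
            (C a * X 0 + C b * X 1) * X 2] G := by
  conv_lhs => rw [G.as_sum]
  conv_rhs => rw [G.as_sum]
  simp only [conchSubC, map_sum, Polynomial.finset_sum_coeff, Finset.mul_sum, Finset.sum_mul]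
  rw [Finset.sum_comm]
  refine Finset.sum_congr rfl fun s hs => ?_
  have hdeg : s 0 + s 1 + s 2 = δ := by
    have := hG (mem_support_iff.mp hs)
    simp [Finsupp.weight_apply, Finsupp.sum_fintype, Fin.sum_univ_three] at this
    omega
  have := conch_keymono a b c δ s hdeg (G.coeff s)
  simp only [conchSubC] at this
  exact this

end ConchAux2

/-- the conchoid with respect to a line `F = ax + by + cz`:
for `G` homogeneous of degree `δ ≥ 1`, the conchoidal resultant `R(F,G)`
equals, up to sign, `G(x(ax+by+cz), y(ax+by+cz), (ax+by)z)`. -/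
theorem conchRes_line {k : Type*} [Field k] (a b c : k) (δ : ℕ) (hδ : 1 ≤ δ)
    (G : MvPolynomial (Fin 3) k) (hG : G.IsHomogeneous δ) :
    conchRes 1 δ
        (MvPolynomial.C a * X 0 + MvPolynomial.C b * X 1 + MvPolynomial.C c * X 2) G =
      MvPolynomial.aeval
        ![X 0 * (MvPolynomial.C a * X 0 + MvPolynomial.C b * X 1 + MvPolynomial.C c * X 2),
          X 1 * (MvPolynomial.C a * X 0 + MvPolynomial.C b * X 1 + MvPolynomial.C c * X 2),
          (MvPolynomial.C a * X 0 + MvPolynomial.C b * X 1) * X 2] G ∨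
    conchRes 1 δ
        (MvPolynomial.C a * X 0 + MvPolynomial.C b * X 1 + MvPolynomial.C c * X 2) G =
      - MvPolynomial.aeval
        ![X 0 * (MvPolynomial.C a * X 0 + MvPolynomial.C b * X 1 + MvPolynomial.C c * X 2),
          X 1 * (MvPolynomial.C a * X 0 + MvPolynomial.C b * X 1 + MvPolynomial.C c * X 2),
          (MvPolynomial.C a * X 0 + MvPolynomial.C b * X 1) * X 2] G := by
  have hres : conchRes 1 δ
        (MvPolynomial.C a * X 0 + MvPolynomial.C b * X 1 + MvPolynomial.C c * X 2) G
      = (-1)^δ * MvPolynomial.aeval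
        ![X 0 * (MvPolynomial.C a * X 0 + MvPolynomial.C b * X 1 + MvPolynomial.C c * X 2),
          X 1 * (MvPolynomial.C a * X 0 + MvPolynomial.C b * X 1 + MvPolynomial.C c * X 2),
          (MvPolynomial.C a * X 0 + MvPolynomial.C b * X 1) * X 2] G := by
    rw [conchRes, syl_formula, ← conch_key a b c δ G hG]
    refine Finset.sum_congr rfl fun m _ => ?_
    rw [conch_hB0, conch_hB1]
  rcases Nat.even_or_odd δ with h | h
  · left
    rw [hres, h.neg_one_pow, one_mul]
  · right
    rw [hres, h.neg_one_pow, neg_one_mul]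
end

section
/- Let S be a discrete valuation ring with valuation v, let a ≤ b be positive integers, and let M be the 2b × b matrix over S with rows (0,…,0,g₁,…,g_{b-j}) for j = 0,…,b-1 (the g-block, b rows) stacked over rows (0,…,0,f₁,…,f_{b-j}) for j = 0,…,b-1 (the f-block, b rows), where v(f₁) = b, v(g₁) = a, v(fᵢ) ≥ b+1-i, and v(gᵢ) ≥ a+1-i for all i = 1,…,b. Then every b × b minor m of M satisfies v(m) ≥ a(b-a) + a(a+1)/2. -/
open Finset

private lemma aux_two_mul_sum (n : ℕ) : 2 * ∑ j ∈ range n, (j + 1) = n * (n + 1) := by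
  induction n with
  | zero => simp
  | succ n ih => rw [Finset.sum_range_succ, Nat.mul_add, ih]; ring

private lemma aux_sum_min (a b : ℕ) (hab : a ≤ b) :
    ∑ j ∈ range b, min (j + 1) a = a * (b - a) + a * (a + 1) / 2 := by
  induction b, hab using Nat.le_induction with
  | base =>
      have h1 : ∑ j ∈ range a, min (j + 1) a = ∑ j ∈ range a, (j + 1) :=
        Finset.sum_congr rfl fun j hj => by
          have := Finset.mem_range.mp hj; omega
      have h2 := aux_two_mul_sum a
      rw [h1, Nat.sub_self, Nat.mul_zero, Nat.zero_add]
      omega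
  | succ b hb ih =>
      rw [Finset.sum_range_succ, ih]
      have h3 : a * (b + 1 - a) = a * (b - a) + a := by
        rw [show b + 1 - a = (b - a) + 1 from by omega, Nat.mul_succ]
      omega

private lemma aux_prod_val {S : Type*} [CommRing S] (V : AddValuation S ℕ∞)
    {ι : Type*} (s : Finset ι) (p : ι → S) (w : ι → ℕ∞)
    (h : ∀ i ∈ s, w i ≤ V (p i)) :
    ∑ i ∈ s, w i ≤ V (∏ i ∈ s, p i) := by
  classical
  induction s using Finset.cons_induction with
  | empty => simp [V.map_one]
  | cons i s hi ih =>
      rw [Finset.prod_cons, Finset.sum_cons, V.map_mul]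
      exact add_le_add (h i (Finset.mem_cons_self i s))
        (ih fun j hj => h j (Finset.mem_cons_of_mem hj))

private lemma aux_key (a b : ℕ) (hab : a ≤ b) (r : Fin b → Fin (2 * b))
    (hr : Function.Injective r)
    (hgle : ∀ c : Fin b, (r c : ℕ) < b → (r c : ℕ) ≤ (c : ℕ)) :
    ∑ j ∈ range b, min (j + 1) a ≤
      ∑ c : Fin b,
        (if (r c : ℕ) < b then a + 1 - ((c : ℕ) - (r c : ℕ) + 1)
         else b + 1 - ((c : ℕ) - ((r c : ℕ) - b) + 1)) := by
  classical
  set s' : Fin b → ℕ := fun c => if (r c : ℕ) < b then (r c : ℕ) else (r c : ℕ) - b with hs'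
  set cap : Fin b → ℕ := fun c => if (r c : ℕ) < b then a else b with hcap
  -- step 1 : per-column count bound
  have step1 : ∀ c : Fin b,
      ((range b).filter (fun j => (c : ℕ) ≤ j ∧ j < s' c + cap c)).card ≤
      (if (r c : ℕ) < b then a + 1 - ((c : ℕ) - (r c : ℕ) + 1)
       else b + 1 - ((c : ℕ) - ((r c : ℕ) - b) + 1)) := by
    intro c
    have h1 : ((range b).filter (fun j => (c : ℕ) ≤ j ∧ j < s' c + cap c)) ⊆
        Finset.Ico (c : ℕ) (s' c + cap c) := by
      intro j hj
      simp only [Finset.mem_filter, Finset.mem_range] at hj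
      exact Finset.mem_Ico.mpr ⟨hj.2.1, hj.2.2⟩
    have h2 : ((range b).filter (fun j => (c : ℕ) ≤ j ∧ j < s' c + cap c)) ⊆
        Finset.Ico (c : ℕ) b := by
      intro j hj
      simp only [Finset.mem_filter, Finset.mem_range] at hj
      exact Finset.mem_Ico.mpr ⟨hj.2.1, hj.1⟩
    have c1 := Finset.card_le_card h1
    have c2 := Finset.card_le_card h2
    rw [Nat.card_Ico] at c1 c2
    by_cases hc : (r c : ℕ) < b
    · have := hgle c hc
      simp only [hs', hcap, if_pos hc] at c1 ⊢
      omega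
    · simp only [hs', hcap, if_neg hc] at c1 c2 ⊢
      omega
  -- step 2 : double counting
  have step2 : ∑ c : Fin b, ((range b).filter
        (fun j => (c : ℕ) ≤ j ∧ j < s' c + cap c)).card =
      ∑ j ∈ range b, ((univ : Finset (Fin b)).filter
        (fun c : Fin b => (c : ℕ) ≤ j ∧ j < s' c + cap c)).card := by
    simp_rw [Finset.card_filter]
    exact Finset.sum_comm
  -- step 3 : per-j lower bound
  have step3 : ∀ j ∈ range b, min (j + 1) a ≤
      ((univ : Finset (Fin b)).filter
        (fun c : Fin b => (c : ℕ) ≤ j ∧ j < s' c + cap c)).card := by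
    intro j hj
    have hjb : j < b := Finset.mem_range.mp hj
    set A : Finset (Fin b) := (univ : Finset (Fin b)).filter (fun c : Fin b => (c : ℕ) ≤ j) with hA
    have hAcard : A.card = j + 1 := by
      have : A = Finset.Iic (⟨j, hjb⟩ : Fin b) := by
        ext c
        simp [hA, Fin.le_def]
      rw [this, Fin.card_Iic]
    set bad : Finset (Fin b) := A.filter (fun c : Fin b => ¬ (j < s' c + cap c)) with hbad
    have hsplit : (A.filter (fun c : Fin b => j < s' c + cap c)).card + bad.card = A.card :=
      Finset.card_filter_add_card_filter_not _
    have hgood : A.filter (fun c : Fin b => j < s' c + cap c) =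
        (univ : Finset (Fin b)).filter (fun c : Fin b => (c : ℕ) ≤ j ∧ j < s' c + cap c) := by
      rw [hA, Finset.filter_filter]
    have hbadcard : bad.card ≤ j + 1 - a := by
      have := Finset.card_le_card_of_injOn (s := bad) (t := range (j + 1 - a)) (fun c => (r c : ℕ))
        (fun c hc => by
          simp only [Finset.mem_coe, hbad, hA, Finset.mem_filter, Finset.mem_univ, true_and, not_lt] at hc
          obtain ⟨hcj, hcv⟩ := hc
          by_cases hrc : (r c : ℕ) < b
          · simp only [hs', hcap, if_pos hrc] at hcv
            simp only [Finset.mem_coe, Finset.mem_range]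
            omega
          · simp only [hs', hcap, if_neg hrc] at hcv
            omega)
        (fun c1 _ c2 _ h => hr (Fin.val_injective h))
      rwa [Finset.card_range] at this
    rw [hgood] at hsplit
    omega
  calc ∑ j ∈ range b, min (j + 1) a
      ≤ ∑ j ∈ range b, ((univ : Finset (Fin b)).filter
          (fun c : Fin b => (c : ℕ) ≤ j ∧ j < s' c + cap c)).card := Finset.sum_le_sum step3
    _ = ∑ c : Fin b, ((range b).filter
          (fun j => (c : ℕ) ≤ j ∧ j < s' c + cap c)).card := step2.symm
    _ ≤ _ := Finset.sum_le_sum fun c _ => step1 c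

/-- the valuation-theoretic lemma on minors.  `S` is a discrete
valuation ring with additive valuation `v` (with `v 0 = ⊤`).  `M` is the
`2b × b` matrix whose first `b` rows shift the sequence `g 1, …, g b` and whose
last `b` rows shift the sequence `f 1, …, f b`.  If `v (f 1) = b`, `v (g 1) = a`
and `v (f i) ≥ b + 1 - i`, `v (g i) ≥ a + 1 - i` for `1 ≤ i ≤ b`, then every
`b × b` minor `m` of `M` satisfies `v m ≥ a(b-a) + a(a+1)/2`. -/
theorem dvr_minor_valuation {S : Type*} [CommRing S] [IsDomain S]
    [IsDiscreteValuationRing S] (a b : ℕ) (ha : 0 < a) (hab : a ≤ b)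
    (f g : ℕ → S)
    (v : S → ℕ∞) (hv : v = fun s => IsDiscreteValuationRing.addVal S s)
    (M : Matrix (Fin (2 * b)) (Fin b) S)
    (hM : ∀ (i : Fin (2 * b)) (j : Fin b),
      M i j =
        if (i : ℕ) < b then
          (if (i : ℕ) ≤ (j : ℕ) then g ((j : ℕ) - (i : ℕ) + 1) else 0)
        else
          (if (i : ℕ) - b ≤ (j : ℕ) then f ((j : ℕ) - ((i : ℕ) - b) + 1) else 0))
    (hf1 : v (f 1) = (b : ℕ∞)) (hg1 : v (g 1) = (a : ℕ∞))
    (hf : ∀ i, 1 ≤ i → i ≤ b → ((b + 1 - i : ℕ) : ℕ∞) ≤ v (f i))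
    (hg : ∀ i, 1 ≤ i → i ≤ b → ((a + 1 - i : ℕ) : ℕ∞) ≤ v (g i)) :
    ∀ rows : Fin b → Fin (2 * b), Function.Injective rows →
      ((a * (b - a) + a * (a + 1) / 2 : ℕ) : ℕ∞) ≤
        v ((M.submatrix rows id).det) := by
  subst hv
  dsimp only at hf hg ⊢
  set V := IsDiscreteValuationRing.addVal S with hV
  intro rows hrows
  rw [Matrix.det_apply]
  refine V.map_le_sum (fun σ _ => ?_)
  -- kill the sign
  have hsign : V (Equiv.Perm.sign σ • ∏ i, (M.submatrix rows id) (σ i) i) =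
      V (∏ i, (M.submatrix rows id) (σ i) i) := by
    rcases Int.units_eq_one_or (Equiv.Perm.sign σ) with h | h <;> rw [h]
    · rw [one_smul]
    · have : (-1 : ℤˣ) • (∏ i, (M.submatrix rows id) (σ i) i) =
          -(∏ i, (M.submatrix rows id) (σ i) i) := by
        simp
      have hm1 : V (-1 : S) = 0 := by
        have h1 : V (-1 : S) + V (-1 : S) = 0 := by
          rw [← V.map_mul]; simp [V.map_one]
        exact (add_eq_zero.mp h1).1
      rw [this, show -∏ i, (M.submatrix rows id) (σ i) i =
        (-1 : S) * ∏ i, (M.submatrix rows id) (σ i) i from (neg_one_mul _).symm,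
        V.map_mul, hm1, zero_add]
  rw [hsign]
  -- the chosen rows
  set r : Fin b → Fin (2 * b) := fun c => rows (σ c) with hrdef
  have hrinj : Function.Injective r := hrows.comp σ.injective
  by_cases hz : ∀ c : Fin b,
      (if (r c : ℕ) < b then (r c : ℕ) ≤ (c : ℕ) else (r c : ℕ) - b ≤ (c : ℕ))
  · -- all entries in the "upper triangular" region
    set W : Fin b → ℕ := fun c =>
      if (r c : ℕ) < b then a + 1 - ((c : ℕ) - (r c : ℕ) + 1)
      else b + 1 - ((c : ℕ) - ((r c : ℕ) - b) + 1) with hW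
    have hWle : ∀ c : Fin b, ((W c : ℕ∞)) ≤ V ((M.submatrix rows id) (σ c) c) := by
      intro c
      have hc : (M.submatrix rows id) (σ c) c = M (r c) c := by
        simp [Matrix.submatrix_apply, hrdef]
      rw [hc, hM (r c) c]
      have hzc := hz c
      by_cases hrc : (r c : ℕ) < b
      · rw [if_pos hrc] at hzc ⊢
        rw [if_pos hzc]
        have h1 : 1 ≤ (c : ℕ) - (r c : ℕ) + 1 := by omega
        have h2 : (c : ℕ) - (r c : ℕ) + 1 ≤ b := by
          have := c.isLt; omega
        have := hg _ h1 h2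
        simpa [hW, if_pos hrc] using this
      · rw [if_neg hrc] at hzc ⊢
        rw [if_pos hzc]
        have h1 : 1 ≤ (c : ℕ) - ((r c : ℕ) - b) + 1 := by omega
        have h2 : (c : ℕ) - ((r c : ℕ) - b) + 1 ≤ b := by
          have := c.isLt; omega
        have := hf _ h1 h2
        simpa [hW, if_neg hrc] using this
    have hcount := aux_key a b hab r hrinj (fun c hc => by
      have := hz c; rw [if_pos hc] at this; exact this)
    rw [aux_sum_min a b hab] at hcount
    calc ((a * (b - a) + a * (a + 1) / 2 : ℕ) : ℕ∞)
        ≤ ((∑ c : Fin b, W c : ℕ) : ℕ∞) := by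
          exact_mod_cast hcount
      _ = ∑ c : Fin b, ((W c : ℕ∞)) := by push_cast; rfl
      _ ≤ V (∏ i, (M.submatrix rows id) (σ i) i) :=
          aux_prod_val V univ _ _ (fun c _ => hWle c)
  · -- some entry is zero
    push_neg at hz
    obtain ⟨c, hc⟩ := hz
    have hzero : (M.submatrix rows id) (σ c) c = 0 := by
      have hcM : (M.submatrix rows id) (σ c) c = M (r c) c := by
        simp [Matrix.submatrix_apply, hrdef]
      rw [hcM, hM (r c) c]
      by_cases hrc : (r c : ℕ) < b
      · rw [if_pos hrc] at hc ⊢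
        rw [if_neg (by omega : ¬ ((r c : ℕ) ≤ (c : ℕ)))]
      · rw [if_neg hrc] at hc ⊢
        rw [if_neg (by omega : ¬ ((r c : ℕ) - b ≤ (c : ℕ)))]
    have : (∏ i, (M.submatrix rows id) (σ i) i) = 0 :=
      Finset.prod_eq_zero (Finset.mem_univ c) hzero
    rw [this, V.map_zero]
    exact le_top
end

section
/- Let F ∈ k[x,y,z] be homogeneous of degree d with F(0,0,1) ≠ 0 (the curve B: F=0 does not pass through A=[0:0:1]). Then the affine incidence surface W^{(a)} = {(x,y,X,Y) ∈ k⁴ : F(X-x, Y-y, 1) = 0 and xY - yX = 0} is isomorphic, as an algebraic variety, to B^{(a)} × 𝔸¹, where B^{(a)} = {(u,v) ∈ k² : F(u,v,1) = 0}. Explicitly, the map (u,v,λ) ↦ (λu, λv, (λ+1)u, (λ+1)v) is an isomorphism from B^{(a)} × 𝔸¹ to W^{(a)}. -/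
open MvPolynomial

/-- if the curve `B : F = 0` does not pass through `A = [0:0:1]`,
the affine incidence surface
`W⁽ᵃ⁾ = {(x,y,X,Y) : F(X-x, Y-y, 1) = 0, xY - yX = 0}` is isomorphic to
`B⁽ᵃ⁾ × 𝔸¹`, via the explicit map `((u,v), λ) ↦ (λu, λv, (λ+1)u, (λ+1)v)`,
which is a bijection from `B⁽ᵃ⁾ × 𝔸¹` onto `W⁽ᵃ⁾`. -/
theorem incidence_surface_product {k : Type*} [Field k] (d : ℕ)
    (F : MvPolynomial (Fin 3) k) (hF : F.IsHomogeneous d)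
    (hA : MvPolynomial.eval (![0, 0, 1] : Fin 3 → k) F ≠ 0) :
    Set.BijOn
      (fun p : (k × k) × k =>
        ((p.2 * p.1.1, p.2 * p.1.2), ((p.2 + 1) * p.1.1, (p.2 + 1) * p.1.2)))
      ({uv : k × k | MvPolynomial.eval (![uv.1, uv.2, 1] : Fin 3 → k) F = 0} ×ˢ
        (Set.univ : Set k))
      {w : (k × k) × (k × k) |
        MvPolynomial.eval (![w.2.1 - w.1.1, w.2.2 - w.1.2, 1] : Fin 3 → k) F = 0 ∧
        w.1.1 * w.2.2 - w.1.2 * w.2.1 = 0} := by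
  refine ⟨?_, ?_, ?_⟩
  · rintro ⟨⟨u, v⟩, l⟩ ⟨hu, -⟩
    simp only [Set.mem_setOf_eq] at hu ⊢
    refine ⟨?_, by ring⟩
    have hvec : (![(l + 1) * u - l * u, (l + 1) * v - l * v, 1] : Fin 3 → k)
        = ![u, v, 1] := by
      ext i; fin_cases i <;> simp <;> ring
    rw [hvec]; exact hu
  · rintro ⟨⟨u, v⟩, l⟩ ⟨hu, -⟩ ⟨⟨u', v'⟩, l'⟩ ⟨hu', -⟩ heq
    simp only [Set.mem_setOf_eq] at hu hu'
    simp only [Prod.mk.injEq] at heq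
    obtain ⟨⟨h1, h2⟩, h3, h4⟩ := heq
    have huu : u = u' := by linear_combination h3 - h1
    have hvv : v = v' := by linear_combination h4 - h2
    subst huu hvv
    have hnz : u ≠ 0 ∨ v ≠ 0 := by
      by_contra h
      push_neg at h
      obtain ⟨h5, h6⟩ := h
      rw [h5, h6] at hu
      exact hA hu
    have hl : l = l' := by
      rcases hnz with h | h
      · exact mul_right_cancel₀ h h1
      · exact mul_right_cancel₀ h h2
    simp [hl]
  · rintro ⟨⟨x, y⟩, ⟨X, Y⟩⟩ ⟨hW, hline⟩
    simp only [Set.mem_setOf_eq] at hW hline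
    set u := X - x with hu
    set v := Y - y with hv
    have hnz : u ≠ 0 ∨ v ≠ 0 := by
      by_contra h
      push_neg at h
      obtain ⟨h5, h6⟩ := h
      simp only [h5, h6] at hW
      exact hA hW
    have hcross : x * v = y * u := by
      simp only [hu, hv]; linear_combination hline
    rcases hnz with h | h
    · refine ⟨⟨⟨u, v⟩, x / u⟩, ⟨hW, Set.mem_univ _⟩, ?_⟩
      simp only [Prod.mk.injEq]
      refine ⟨⟨by field_simp, ?_⟩, ?_, ?_⟩
      · field_simp; linear_combination hcross
      · field_simp; ring
      · field_simp; linear_combination hcross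
    · refine ⟨⟨⟨u, v⟩, y / v⟩, ⟨hW, Set.mem_univ _⟩, ?_⟩
      have hcross' : y * u = x * v := hcross.symm
      simp only [Prod.mk.injEq]
      refine ⟨⟨?_, by field_simp⟩, ?_, ?_⟩
      · field_simp; linear_combination hcross'
      · field_simp; linear_combination hcross'
      · field_simp; ring
end

section
/- Let F ∈ k[x,y,z] be homogeneous of degree d ≥ 1, defining a smooth plane curve B not through A = [0:0:1], with char k = 0 or char k > d. Let W_B ⊂ ℙ²×ℙ² be defined by F(zX - xZ, zY - yZ, zZ) = 0 and xY - yX = 0. Then every point of W_B with z ≠ 0, Z = 0 (or z = 0, Z ≠ 0) is a smooth point of W_B, i.e., the Jacobian matrix of the two defining equations has rank 2 there. -/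
open MvPolynomial

lemma my_chain {k : Type*} [CommSemiring k] {n m : Type*} [Fintype n] [DecidableEq n]
    [DecidableEq m]
    (F : MvPolynomial n k) (s : n → MvPolynomial m k) (j : m) :
    pderiv j (aeval s F) = ∑ i, aeval s (pderiv i F) * pderiv j (s i) := by
  induction F using MvPolynomial.induction_on with
  | C a => simp
  | add p q hp hq =>
    rw [map_add, map_add, hp, hq, ← Finset.sum_add_distrib]
    exact Finset.sum_congr rfl fun x _ => by simp only [map_add, add_mul]
  | mul_X p i hp =>
    have key : ∀ x : n, (aeval s) ((pderiv x) (p * X i)) * pderiv j (s x)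
        = (aeval s (pderiv x p) * pderiv j (s x)) * s i
          + (if x = i then aeval s p * pderiv j (s i) else 0) := by
      intro x
      by_cases hx : x = i
      · subst hx
        rw [pderiv_mul, pderiv_X, Pi.single_eq_same, if_pos rfl]
        simp only [map_add, map_mul, map_one, aeval_X, mul_one]
        ring
      · rw [pderiv_mul, pderiv_X, Pi.single_eq_of_ne (Ne.symm hx), if_neg hx]
        simp only [map_add, map_mul, map_zero, aeval_X, mul_zero, add_zero]
        ring
    rw [map_mul, aeval_X, pderiv_mul, hp, Finset.sum_congr rfl (fun x _ => key x),
      Finset.sum_add_distrib, Finset.sum_ite_eq' Finset.univ i, ← Finset.sum_mul]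
    simp [add_comm]

lemma my_rank_two {K : Type*} [Field K] (M : Matrix (Fin 2) (Fin 6) K) (a b : Fin 6)
    (h : M 0 a * M 1 b - M 0 b * M 1 a ≠ 0) : M.rank = 2 := by
  refine le_antisymm (M.rank_le_card_height.trans (by simp)) ?_
  set E : Matrix (Fin 6) (Fin 2) K := Matrix.of fun j i => if j = ![a, b] i then 1 else 0 with hE
  have hME : ∀ r i, (M * E) r i = M r (![a, b] i) := by
    intro r i
    simp only [Matrix.mul_apply, hE, Matrix.of_apply, mul_ite, mul_one, mul_zero]
    rw [Finset.sum_ite_eq' _ (![a,b] i)]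
    simp
  have hdet : (M * E).det ≠ 0 := by
    rw [Matrix.det_fin_two, hME, hME, hME, hME]
    simpa using h
  have h2 : (M * E).rank = 2 := by
    rw [Matrix.rank_of_isUnit _ ((Matrix.isUnit_iff_isUnit_det _).2 (isUnit_iff_ne_zero.2 hdet))]
    simp
  calc (2:ℕ) = (M * E).rank := h2.symm
    _ ≤ M.rank := Matrix.rank_mul_le_left M E

/-- smoothness of `W_B` at points with `z ≠ 0, Z = 0` (or
`z = 0, Z ≠ 0`).  In the bihomogeneous coordinates `(x,y,z,X,Y,Z)` (variables
`0,…,5`), `W_B` is defined by `P₁ = F(zX - xZ, zY - yZ, zZ)` and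
`P₂ = xY - yX`.  If `B : F = 0` is smooth of degree `d ≥ 1`, does not pass
through `A = [0:0:1]`, and `char k = 0` or `char k > d`, then the Jacobian
matrix of `(P₁, P₂)` has rank `2` at every such point of `W_B`. -/
theorem WB_smooth_at_infinity_mixed {k : Type*} [Field k] (d : ℕ) (hd : 1 ≤ d)
    (F : MvPolynomial (Fin 3) k) (hF : F.IsHomogeneous d)
    (hchar : ringChar k = 0 ∨ d < ringChar k)
    (hsmooth : ∀ q : Fin 3 → k, q ≠ 0 → MvPolynomial.eval q F = 0 →
      ∃ i : Fin 3, MvPolynomial.eval q (pderiv i F) ≠ 0)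
    (hA : MvPolynomial.eval (![0, 0, 1] : Fin 3 → k) F ≠ 0)
    (P₁ P₂ : MvPolynomial (Fin 6) k)
    (hP₁ : P₁ = MvPolynomial.aeval
      (![X 2 * X 3 - X 0 * X 5, X 2 * X 4 - X 1 * X 5, X 2 * X 5] :
        Fin 3 → MvPolynomial (Fin 6) k) F)
    (hP₂ : P₂ = X 0 * X 4 - X 1 * X 3)
    (p : Fin 6 → k)
    (hp1 : ¬ (p 0 = 0 ∧ p 1 = 0 ∧ p 2 = 0))
    (hp2 : ¬ (p 3 = 0 ∧ p 4 = 0 ∧ p 5 = 0))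
    (hmixed : (p 2 ≠ 0 ∧ p 5 = 0) ∨ (p 2 = 0 ∧ p 5 ≠ 0))
    (hW1 : MvPolynomial.eval p P₁ = 0) (hW2 : MvPolynomial.eval p P₂ = 0) :
    (Matrix.of
      (![fun j => MvPolynomial.eval p (pderiv j P₁),
         fun j => MvPolynomial.eval p (pderiv j P₂)] :
        Fin 2 → Fin 6 → k)).rank = 2 := by
  set s : Fin 3 → MvPolynomial (Fin 6) k :=
    ![X 2 * X 3 - X 0 * X 5, X 2 * X 4 - X 1 * X 5, X 2 * X 5] with hs
  set q : Fin 3 → k := ![p 2 * p 3 - p 0 * p 5, p 2 * p 4 - p 1 * p 5, p 2 * p 5] with hq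
  have hcomp : ∀ G : MvPolynomial (Fin 3) k, eval p (aeval s G) = eval q G := by
    intro G
    have hqs : ⇑(eval p) ∘ s = q := by
      funext i
      fin_cases i <;> simp [hs, hq, Function.comp]
    rw [aeval_def, algebraMap_eq, ← eval_assoc, hqs]
  have hqF : eval q F = 0 := by rw [← hcomp F, ← hP₁]; exact hW1
  set f : Fin 3 → k := fun i => eval q (pderiv i F) with hf
  have hdP : ∀ j, eval p (pderiv j P₁)
      = f 0 * eval p (pderiv j (s 0)) + f 1 * eval p (pderiv j (s 1))
        + f 2 * eval p (pderiv j (s 2)) := by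
    intro j
    rw [hP₁, my_chain, map_sum, Fin.sum_univ_three]
    simp only [map_mul, hcomp, hf]
  have hs0 : s 0 = X 2 * X 3 - X 0 * X 5 := rfl
  have hs1 : s 1 = X 2 * X 4 - X 1 * X 5 := rfl
  have hs2 : s 2 = X 2 * X 5 := rfl
  have d0 : eval p (pderiv 0 P₁) = -(p 5) * f 0 := by
    rw [hdP 0, hs0, hs1, hs2]; simp [pderiv_mul, pderiv_X, Pi.single_apply]; ring
  have d1 : eval p (pderiv 1 P₁) = -(p 5) * f 1 := by
    rw [hdP 1, hs0, hs1, hs2]; simp [pderiv_mul, pderiv_X, Pi.single_apply]; ring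
  have d2 : eval p (pderiv 2 P₁) = p 3 * f 0 + p 4 * f 1 + p 5 * f 2 := by
    rw [hdP 2, hs0, hs1, hs2]; simp [pderiv_mul, pderiv_X, Pi.single_apply]; ring
  have d3 : eval p (pderiv 3 P₁) = p 2 * f 0 := by
    rw [hdP 3, hs0, hs1, hs2]; simp [pderiv_mul, pderiv_X, Pi.single_apply]; ring
  have d4 : eval p (pderiv 4 P₁) = p 2 * f 1 := by
    rw [hdP 4, hs0, hs1, hs2]; simp [pderiv_mul, pderiv_X, Pi.single_apply]; ring
  have e0 : eval p (pderiv 0 P₂) = p 4 := by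
    rw [hP₂]; simp [pderiv_mul, pderiv_X, Pi.single_apply]
  have e1 : eval p (pderiv 1 P₂) = -(p 3) := by
    rw [hP₂]; simp [pderiv_mul, pderiv_X, Pi.single_apply]
  have e3 : eval p (pderiv 3 P₂) = -(p 1) := by
    rw [hP₂]; simp [pderiv_mul, pderiv_X, Pi.single_apply]
  have e4 : eval p (pderiv 4 P₂) = p 0 := by
    rw [hP₂]; simp [pderiv_mul, pderiv_X, Pi.single_apply]
  set M : Matrix (Fin 2) (Fin 6) k := Matrix.of
      (![fun j => MvPolynomial.eval p (pderiv j P₁),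
         fun j => MvPolynomial.eval p (pderiv j P₂)] :
        Fin 2 → Fin 6 → k) with hM
  have hM0 : ∀ j, M 0 j = eval p (pderiv j P₁) := fun j => rfl
  have hM1 : ∀ j, M 1 j = eval p (pderiv j P₂) := fun j => rfl
  rcases hmixed with ⟨h2, h5⟩ | ⟨h2, h5⟩
  · -- z ≠ 0, Z = 0
    have hp34 : p 3 ≠ 0 ∨ p 4 ≠ 0 := by
      by_contra h
      push_neg at h
      exact hp2 ⟨h.1, h.2, h5⟩
    obtain ⟨i, hi⟩ : ∃ i : Fin 3, f i ≠ 0 := by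
      apply hsmooth q _ hqF
      intro h0
      have h3 : p 3 = 0 := by
        have := congrFun h0 0
        simp [hq, h5] at this
        rcases this with h | h
        · exact absurd h h2
        · exact h
      have h4 : p 4 = 0 := by
        have := congrFun h0 1
        simp [hq, h5] at this
        rcases this with h | h
        · exact absurd h h2
        · exact h
      exact hp2 ⟨h3, h4, h5⟩
    by_cases hf0 : f 0 = 0
    · by_cases hf1 : f 1 = 0
      · have hf2 : f 2 ≠ 0 := by
          fin_cases i
          · exact absurd hf0 hi
          · exact absurd hf1 hi
          · exact hi
        have d5 : eval p (pderiv 5 P₁) = -(p 0) * f 0 + -(p 1) * f 1 + p 2 * f 2 := by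
          rw [hdP 5, hs0, hs1, hs2]; simp [pderiv_mul, pderiv_X, Pi.single_apply]; ring
        rcases hp34 with h3 | h4
        · refine my_rank_two M 5 1 ?_
          rw [hM0, hM0, hM1, hM1, d5, d1, e1, hf0, hf1]
          intro h
          apply h2
          have : p 2 * f 2 * -(p 3) = 0 := by linear_combination h
          rcases mul_eq_zero.1 this with h' | h'
          · rcases mul_eq_zero.1 h' with h'' | h''
            · exact h''
            · exact absurd h'' hf2
          · exact absurd (neg_eq_zero.1 h') h3
        · refine my_rank_two M 5 0 ?_
          rw [hM0, hM0, hM1, hM1, d5, d0, e0, hf0, hf1]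
          intro h
          apply h2
          have : p 2 * f 2 * p 4 = 0 := by linear_combination h
          rcases mul_eq_zero.1 this with h' | h'
          · rcases mul_eq_zero.1 h' with h'' | h''
            · exact h''
            · exact absurd h'' hf2
          · exact absurd h' h4
      · rcases hp34 with h3 | h4
        · refine my_rank_two M 4 1 ?_
          rw [hM0, hM0, hM1, hM1, d4, d1, e1, h5]
          intro h
          have : p 2 * f 1 * p 3 = 0 := by linear_combination -h
          rcases mul_eq_zero.1 this with h' | h'
          · rcases mul_eq_zero.1 h' with h'' | h''
            · exact h2 h''
            · exact hf1 h''
          · exact h3 h'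
        · refine my_rank_two M 4 0 ?_
          rw [hM0, hM0, hM1, hM1, d4, d0, e0, h5]
          intro h
          have : p 2 * f 1 * p 4 = 0 := by linear_combination h
          rcases mul_eq_zero.1 this with h' | h'
          · rcases mul_eq_zero.1 h' with h'' | h''
            · exact h2 h''
            · exact hf1 h''
          · exact h4 h'
    · rcases hp34 with h3 | h4
      · refine my_rank_two M 3 1 ?_
        rw [hM0, hM0, hM1, hM1, d3, d1, e1, h5]
        intro h
        have : p 2 * f 0 * p 3 = 0 := by linear_combination -h
        rcases mul_eq_zero.1 this with h' | h'
        · rcases mul_eq_zero.1 h' with h'' | h''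
          · exact h2 h''
          · exact hf0 h''
        · exact h3 h'
      · refine my_rank_two M 3 0 ?_
        rw [hM0, hM0, hM1, hM1, d3, d0, e0, h5]
        intro h
        have : p 2 * f 0 * p 4 = 0 := by linear_combination h
        rcases mul_eq_zero.1 this with h' | h'
        · rcases mul_eq_zero.1 h' with h'' | h''
          · exact h2 h''
          · exact hf0 h''
        · exact h4 h'
  · -- z = 0, Z ≠ 0
    have hp01 : p 0 ≠ 0 ∨ p 1 ≠ 0 := by
      by_contra h
      push_neg at h
      exact hp1 ⟨h.1, h.2, h2⟩
    obtain ⟨i, hi⟩ : ∃ i : Fin 3, f i ≠ 0 := by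
      apply hsmooth q _ hqF
      intro h0
      have h3 : p 0 = 0 := by
        have := congrFun h0 0
        simp [hq, h2] at this
        rcases this with h | h
        · exact h
        · exact absurd h h5
      have h4 : p 1 = 0 := by
        have := congrFun h0 1
        simp [hq, h2] at this
        rcases this with h | h
        · exact h
        · exact absurd h h5
      rcases hp01 with h | h
      · exact h h3
      · exact h h4
    by_cases hf0 : f 0 = 0
    · by_cases hf1 : f 1 = 0
      · have hf2 : f 2 ≠ 0 := by
          fin_cases i
          · exact absurd hf0 hi
          · exact absurd hf1 hi
          · exact hi
        rcases hp01 with h0 | h1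
        · refine my_rank_two M 2 4 ?_
          rw [hM0, hM0, hM1, hM1, d2, d4, e4, hf0, hf1, h2]
          intro h
          have : p 5 * f 2 * p 0 = 0 := by linear_combination h
          rcases mul_eq_zero.1 this with h' | h'
          · rcases mul_eq_zero.1 h' with h'' | h''
            · exact h5 h''
            · exact hf2 h''
          · exact h0 h'
        · refine my_rank_two M 2 3 ?_
          rw [hM0, hM0, hM1, hM1, d2, d3, e3, hf0, hf1, h2]
          intro h
          have : p 5 * f 2 * p 1 = 0 := by linear_combination -h
          rcases mul_eq_zero.1 this with h' | h'
          · rcases mul_eq_zero.1 h' with h'' | h''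
            · exact h5 h''
            · exact hf2 h''
          · exact h1 h'
      · rcases hp01 with h0 | h1
        · refine my_rank_two M 1 4 ?_
          rw [hM0, hM0, hM1, hM1, d1, d4, e4, h2]
          intro h
          have : p 5 * f 1 * p 0 = 0 := by linear_combination -h
          rcases mul_eq_zero.1 this with h' | h'
          · rcases mul_eq_zero.1 h' with h'' | h''
            · exact h5 h''
            · exact hf1 h''
          · exact h0 h'
        · refine my_rank_two M 1 3 ?_
          rw [hM0, hM0, hM1, hM1, d1, d3, e3, h2]
          intro h
          have : p 5 * f 1 * p 1 = 0 := by linear_combination h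
          rcases mul_eq_zero.1 this with h' | h'
          · rcases mul_eq_zero.1 h' with h'' | h''
            · exact h5 h''
            · exact hf1 h''
          · exact h1 h'
    · rcases hp01 with h0 | h1
      · refine my_rank_two M 0 4 ?_
        rw [hM0, hM0, hM1, hM1, d0, d4, e4, h2]
        intro h
        have : p 5 * f 0 * p 0 = 0 := by linear_combination -h
        rcases mul_eq_zero.1 this with h' | h'
        · rcases mul_eq_zero.1 h' with h'' | h''
          · exact h5 h''
          · exact hf0 h''
        · exact h0 h'
      · refine my_rank_two M 0 3 ?_
        rw [hM0, hM0, hM1, hM1, d0, d3, e3, h2]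
        intro h
        have : p 5 * f 0 * p 1 = 0 := by linear_combination h
        rcases mul_eq_zero.1 this with h' | h'
        · rcases mul_eq_zero.1 h' with h'' | h''
          · exact h5 h''
          · exact hf0 h''
        · exact h1 h'
end

section
/- Let F ∈ k[x,y,z] be homogeneous of degree d ≥ 2, defining a curve B, and let W_B ⊂ ℙ²×ℙ² be defined by F(zX - xZ, zY - yZ, zZ) = 0 and xY - yX = 0. Then every point of the form [a:b:0; a:b:0] (with (a,b) ≠ (0,0)) on W_B is a singular point of W_B of multiplicity at least d. -/
open MvPolynomial

private lemma pderiv_mem_pow_aux {k : Type*} [Field k]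
    (I : Ideal (MvPolynomial (Fin 6) k)) (i : Fin 6) :
    ∀ n (p : MvPolynomial (Fin 6) k), p ∈ I ^ (n + 1) → pderiv i p ∈ I ^ n := by
  intro n
  induction n with
  | zero => intro p _; simp
  | succ m ih =>
    intro p hp
    rw [pow_succ] at hp
    refine Submodule.mul_induction_on hp ?_ ?_
    · intro x hx y hy
      rw [pderiv_mul]
      refine Ideal.add_mem _ ?_ ?_
      · rw [pow_succ]
        exact Ideal.mul_mem_mul (ih x hx) hy
      · exact Ideal.mul_mem_right _ _ hx
    · intro x y hx hy
      rw [map_add]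
      exact Ideal.add_mem _ hx hy

private lemma prod_pow_mem_pow {k : Type*} [Field k]
    (I : Ideal (MvPolynomial (Fin 6) k)) (g : Fin 3 → MvPolynomial (Fin 6) k)
    (hg : ∀ i, g i ∈ I) (v : Fin 3 →₀ ℕ) :
    (v.prod fun i n => g i ^ n) ∈ I ^ v.degree := by
  rw [Finsupp.prod, Finsupp.degree_apply]
  classical
  induction v.support using Finset.induction with
  | empty => simp
  | @insert j s hnot ih =>
    rw [Finset.prod_insert hnot, Finset.sum_insert hnot, pow_add]
    exact Ideal.mul_mem_mul (Ideal.pow_mem_pow (hg j) _) ih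

/-- points `[a:b:0; a:b:0]` (with `(a,b) ≠ (0,0)`) lie on `W_B`
and are singular of multiplicity at least `d ≥ 2`: all partial derivatives of
the first defining equation `P₁ = F(zX - xZ, zY - yZ, zZ)` of order at most
`d - 1` (i.e. of order `< d`) vanish there, and the second equation
`P₂ = xY - yX` vanishes there as well. -/
theorem WB_singular_on_diagonal_at_infinity {k : Type*} [Field k] (d : ℕ)
    (hd : 2 ≤ d) (F : MvPolynomial (Fin 3) k) (hF : F.IsHomogeneous d)
    (P₁ P₂ : MvPolynomial (Fin 6) k)
    (hP₁ : P₁ = MvPolynomial.aeval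
      (![X 2 * X 3 - X 0 * X 5, X 2 * X 4 - X 1 * X 5, X 2 * X 5] :
        Fin 3 → MvPolynomial (Fin 6) k) F)
    (hP₂ : P₂ = X 0 * X 4 - X 1 * X 3)
    (a b : k) (hab : ¬ (a = 0 ∧ b = 0)) :
    MvPolynomial.eval (![a, b, 0, a, b, 0] : Fin 6 → k) P₂ = 0 ∧
    ∀ L : List (Fin 6), L.length < d →
      MvPolynomial.eval (![a, b, 0, a, b, 0] : Fin 6 → k)
        (L.foldr (fun i q => pderiv i q) P₁) = 0 := by
  set g : Fin 3 → MvPolynomial (Fin 6) k :=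
    ![X 2 * X 3 - X 0 * X 5, X 2 * X 4 - X 1 * X 5, X 2 * X 5] with hg
  set I : Ideal (MvPolynomial (Fin 6) k) := Ideal.span {X 2, X 5} with hI
  have hgI : ∀ i, g i ∈ I := by
    have h2 : (X 2 : MvPolynomial (Fin 6) k) ∈ I :=
      Ideal.subset_span (by simp)
    have h5 : (X 5 : MvPolynomial (Fin 6) k) ∈ I :=
      Ideal.subset_span (by simp)
    intro i
    fin_cases i <;> simp only [hg, Matrix.cons_val_zero, Matrix.cons_val_one, Matrix.head_cons,
      Matrix.cons_val_two, Matrix.tail_cons]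
    · exact Ideal.sub_mem _ (Ideal.mul_mem_right _ _ h2) (Ideal.mul_mem_left _ _ h5)
    · exact Ideal.sub_mem _ (Ideal.mul_mem_right _ _ h2) (Ideal.mul_mem_left _ _ h5)
    · exact Ideal.mul_mem_right _ _ h2
  -- P₁ ∈ I ^ d
  have hP₁mem : P₁ ∈ I ^ d := by
    rw [hP₁, F.as_sum, map_sum]
    refine Ideal.sum_mem _ ?_
    intro v hv
    rw [aeval_monomial]
    have hvd : v.degree = d := by
      rw [Finsupp.degree_eq_weight_one]
      exact hF (mem_support_iff.mp hv)
    have := prod_pow_mem_pow I g hgI v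
    rw [hvd] at this
    exact Ideal.mul_mem_left _ _ this
  -- derivatives of order < d stay in I ^ 1
  have key : ∀ L : List (Fin 6), L.length < d →
      (L.foldr (fun i q => pderiv i q) P₁) ∈ I := by
    have main : ∀ L : List (Fin 6), ∀ n, ∀ p : MvPolynomial (Fin 6) k,
        p ∈ I ^ (L.length + n + 1) → (L.foldr (fun i q => pderiv i q) p) ∈ I ^ (n + 1) := by
      intro L
      induction L with
      | nil => intro n p hp; simpa using hp
      | cons i t ih =>
        intro n p hp
        simp only [List.foldr_cons]
        have : t.foldr (fun i q => pderiv i q) p ∈ I ^ (n + 1 + 1) := by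
          apply ih (n + 1)
          rwa [show t.length + (n + 1) + 1 = (i :: t).length + n + 1 by
            simp only [List.length_cons]; omega]
        simpa using pderiv_mem_pow_aux I i (n + 1) _ this
    intro L hL
    have hmem : P₁ ∈ I ^ (L.length + (d - L.length - 1) + 1) := by
      have : L.length + (d - L.length - 1) + 1 = d := by omega
      rw [this]; exact hP₁mem
    have := main L (d - L.length - 1) P₁ hmem
    exact (Ideal.pow_le_self (Nat.succ_ne_zero _)) this
  -- evaluation kills I
  have hevalI : ∀ p ∈ I, MvPolynomial.eval (![a, b, 0, a, b, 0] : Fin 6 → k) p = 0 := by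
    intro p hp
    have : I ≤ RingHom.ker (MvPolynomial.eval (![a, b, 0, a, b, 0] : Fin 6 → k)) := by
      rw [hI, Ideal.span_le]
      intro q hq
      simp only [Set.mem_insert_iff, Set.mem_singleton_iff] at hq
      rcases hq with rfl | rfl <;> simp [RingHom.mem_ker, show (![a,b,0,a,b,0] : Fin 6 → k) 5 = 0 from rfl, show (![a,b,0,a,b,0] : Fin 6 → k) 2 = 0 from rfl]
    exact this hp
  constructor
  · rw [hP₂]; simp [mul_comm]
  · intro L hL
    exact hevalI _ (key L hL)
end

section
/- Let B ⊂ ℙ² be a smooth curve of degree d defined by F = 0, not through A = [0:0:1], and let W_B ⊂ ℙ²×ℙ² be defined by F(zX-xZ, zY-yZ, zZ) = 0, xY - yX = 0, with π₁ the first projection. If P = [a:b:0] is a point of the line at infinity with F(a,b,0) ≠ 0, then π₁⁻¹(P) consists of the single point [a:b:0; a:b:0]. -/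
open MvPolynomial

lemma eval_smul_of_isHomogeneous {k : Type*} [CommRing k] {n : ℕ} {σ : Type*}
    {F : MvPolynomial σ k} (hF : F.IsHomogeneous n) (c : k) (x : σ → k) :
    MvPolynomial.eval (fun i => c * x i) F = c ^ n * MvPolynomial.eval x F := by
  classical
  rw [eval_eq, eval_eq, Finset.mul_sum]
  apply Finset.sum_congr rfl
  intro d hd
  have hdeg : (∑ i ∈ d.support, d i) = n := by
    have := hF (mem_support_iff.mp hd)
    simpa [Finsupp.weight_apply, Finsupp.sum] using this
  simp_rw [mul_pow]
  rw [Finset.prod_mul_distrib, Finset.prod_pow_eq_pow_sum, hdeg]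
  ring

/-- if `P = [a:b:0]` is a point at infinity with `F(a,b,0) ≠ 0`,
then the fiber `π₁⁻¹(P)` of `W_B` over `P` is the single point
`[a:b:0; a:b:0]`: any `[X:Y:Z]` with `([a:b:0],[X:Y:Z]) ∈ W_B` is a nonzero
scalar multiple of `(a, b, 0)`. -/
theorem WB_fiber_at_infinity_not_on_B {k : Type*} [Field k] (d : ℕ)
    (F : MvPolynomial (Fin 3) k) (hF : F.IsHomogeneous d)
    (a b : k) (hab : ¬ (a = 0 ∧ b = 0))
    (hP : MvPolynomial.eval (![a, b, 0] : Fin 3 → k) F ≠ 0) :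
    ∀ X' Y' Z' : k, ¬ (X' = 0 ∧ Y' = 0 ∧ Z' = 0) →
      MvPolynomial.eval
        (![0 * X' - a * Z', 0 * Y' - b * Z', 0 * Z'] : Fin 3 → k) F = 0 →
      a * Y' - b * X' = 0 →
      ∃ t : k, t ≠ 0 ∧ X' = t * a ∧ Y' = t * b ∧ Z' = 0 := by
  intro X' Y' Z' hne heval hline
  have hZ : Z' = 0 := by
    by_contra hZ
    have key : (![0 * X' - a * Z', 0 * Y' - b * Z', 0 * Z'] : Fin 3 → k)
        = fun i => (-Z') * (![a, b, 0] : Fin 3 → k) i := by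
      funext i
      fin_cases i <;> simp <;> ring
    rw [key, eval_smul_of_isHomogeneous hF] at heval
    rcases mul_eq_zero.mp heval with h | h
    · exact hZ (neg_eq_zero.mp (pow_eq_zero_iff'.mp h).1)
    · exact hP h
  subst hZ
  by_cases ha : a = 0
  · have hb : b ≠ 0 := fun h => hab ⟨ha, h⟩
    have hX : X' = 0 := by
      have := hline
      rw [ha] at this
      simpa [hb] using this
    refine ⟨Y' / b, ?_, ?_, ?_, rfl⟩
    · intro h
      apply hne
      exact ⟨hX, by field_simp at h; simp [h], rfl⟩
    · simp [hX, ha]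
    · field_simp
  · refine ⟨X' / a, ?_, ?_, ?_, rfl⟩
    · intro h
      have hX : X' = 0 := by field_simp at h; simp [h]
      have hY : Y' = 0 := by
        have := hline; rw [hX] at this
        have h2 : a * Y' = 0 := by linear_combination this
        rcases mul_eq_zero.mp h2 with h1 | h1
        · exact absurd h1 ha
        · exact h1
      exact hne ⟨hX, hY, rfl⟩
    · field_simp
    · have h2 : a * Y' = b * X' := by linear_combination hline
      field_simp
      linear_combination h2
end

section
/- Let B ⊂ ℙ² be defined by F = 0 with F homogeneous of degree d, and let W_B ⊂ ℙ²×ℙ² be defined by F(zX-xZ, zY-yZ, zZ) = 0, xY - yX = 0, with π₁ the first projection. If P = [a:b:0] satisfies F(a,b,0) = 0, then π₁⁻¹(P) is the rational curve { [a:b:0; λa:λb:μ] : [λ:μ] ∈ ℙ¹ }, which maps isomorphically under the second projection π₂ to the line joining A = [0:0:1] and P. -/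
open MvPolynomial

lemma eval_mul_smul {k : Type*} [CommRing k] {d : ℕ} {F : MvPolynomial (Fin 3) k}
    (hF : F.IsHomogeneous d) (c : k) (x : Fin 3 → k) :
    eval (fun i => c * x i) F = c ^ d * eval x F := by
  rw [eval_eq', eval_eq', Finset.mul_sum]
  refine Finset.sum_congr rfl fun m hm => ?_
  have hdeg : ∑ i, m i = d := by
    have h := hF (mem_support_iff.mp hm)
    simpa [Finsupp.weight, Finsupp.linearCombination, Finsupp.sum_fintype] using h
  calc coeff m F * ∏ i, (c * x i) ^ m i
      = coeff m F * ((∏ i, c ^ m i) * ∏ i, x i ^ m i) := by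
        rw [← Finset.prod_mul_distrib]; simp [mul_pow]
    _ = c ^ d * (coeff m F * ∏ i, x i ^ m i) := by
        rw [Finset.prod_pow_eq_pow_sum, hdeg]; ring

lemma line_param {k : Type*} [Field k] (a b : k) (hab : ¬ (a = 0 ∧ b = 0))
    (X' Y' Z' : k) (hXYZ : ¬ (X' = 0 ∧ Y' = 0 ∧ Z' = 0))
    (h : b * X' - a * Y' = 0) :
    ∃ l m : k, ¬ (l = 0 ∧ m = 0) ∧ X' = l * a ∧ Y' = l * b ∧ Z' = m := by
  rcases eq_or_ne a 0 with ha | ha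
  · have hb : b ≠ 0 := fun hb => hab ⟨ha, hb⟩
    have hX : X' = 0 := by
      have h' : b * X' = 0 := by linear_combination h + Y' * ha
      exact (mul_eq_zero.mp h').resolve_left hb
    refine ⟨Y' / b, Z', ?_, by simp [hX, ha], by field_simp, rfl⟩
    rintro ⟨hl, hm⟩
    exact hXYZ ⟨hX, by field_simp at hl; simpa using hl, hm⟩
  · refine ⟨X' / a, Z', ?_, by field_simp, ?_, rfl⟩
    · rintro ⟨hl, hm⟩
      have hX : X' = 0 := by field_simp at hl; simpa using hl
      have hY : Y' = 0 := by
        have : a * Y' = 0 := by linear_combination -h + b * hX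
        rcases mul_eq_zero.mp this with h' | h'
        · exact absurd h' ha
        · exact h'
      exact hXYZ ⟨hX, hY, hm⟩
    · field_simp
      linear_combination -h

/-- if `P = [a:b:0]` lies on `B` (i.e. `F(a,b,0) = 0`), the fiber
`π₁⁻¹(P)` of `W_B` over `P` is the rational curve `{[a:b:0; λa:λb:μ]}`, which
is exactly the line `bX - aY = 0` joining `A = [0:0:1]` and `P` under the
second projection. -/
theorem WB_fiber_at_infinity_on_B {k : Type*} [Field k] (d : ℕ)
    (F : MvPolynomial (Fin 3) k) (hF : F.IsHomogeneous d)
    (a b : k) (hab : ¬ (a = 0 ∧ b = 0))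
    (hP : MvPolynomial.eval (![a, b, 0] : Fin 3 → k) F = 0) :
    ∀ X' Y' Z' : k, ¬ (X' = 0 ∧ Y' = 0 ∧ Z' = 0) →
      ((MvPolynomial.eval
          (![0 * X' - a * Z', 0 * Y' - b * Z', 0 * Z'] : Fin 3 → k) F = 0 ∧
        a * Y' - b * X' = 0) ↔
        ∃ l m : k, ¬ (l = 0 ∧ m = 0) ∧ X' = l * a ∧ Y' = l * b ∧ Z' = m) ∧
      ((∃ l m : k, ¬ (l = 0 ∧ m = 0) ∧ X' = l * a ∧ Y' = l * b ∧ Z' = m) ↔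
        b * X' - a * Y' = 0) := by
  intro X' Y' Z' hXYZ
  have heval : MvPolynomial.eval
      (![0 * X' - a * Z', 0 * Y' - b * Z', 0 * Z'] : Fin 3 → k) F = 0 := by
    have hfun : (![0 * X' - a * Z', 0 * Y' - b * Z', 0 * Z'] : Fin 3 → k)
        = fun i => (-Z') * (![a, b, 0] : Fin 3 → k) i := by
      funext i; fin_cases i <;> simp <;> ring
    rw [hfun, eval_mul_smul hF, hP, mul_zero]
  constructor
  · constructor
    · rintro ⟨-, h⟩
      exact line_param a b hab X' Y' Z' hXYZ (by linear_combination -h)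
    · rintro ⟨l, m, -, hX, hY, hZ⟩
      exact ⟨heval, by rw [hX, hY]; ring⟩
  · constructor
    · rintro ⟨l, m, -, hX, hY, hZ⟩
      rw [hX, hY]; ring
    · exact line_param a b hab X' Y' Z' hXYZ
end
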